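/- arXiv:1411.6732 — 4 statements merged into one kernel-verified Lean document; each statement's English description precedes it below -/
import Mathlib

section
/- Let D be the generalized dihedral group over a finite abelian group A. Then D is CCA if and only if A is CCA. In particular, every dihedral group is CCA. -/
/-- A map `φ` is colour-preserving for the Cayley graph `Cay(G;S)` if it sends each
edge `x — xs` (coloured `{s,s⁻¹}`) to an edge of the same colour. -/
def ColourPreserving {G : Type*} [Group G] (S : Set G) (φ : G → G) : Prop :=
  ∀ x : G, ∀ s ∈ S, φ (x * s) = φ x * s ∨ φ (x * s) = φ x * s⁻¹

/-- A map `φ` is colour-permuting for `Cay(G;S)` if it permutes the edge colours: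
there is a permutation `π` of `S` with `π (s⁻¹) = (π s)⁻¹` and
`φ(xs) ∈ {φ(x) π(s)^{±1}}`. -/
def ColourPermuting {G : Type*} [Group G] (S : Set G) (φ : G → G) : Prop :=
  ∃ π : G → G, Set.BijOn π S S ∧ (∀ s ∈ S, π s⁻¹ = (π s)⁻¹) ∧
    ∀ x : G, ∀ s ∈ S, φ (x * s) = φ x * π s ∨ φ (x * s) = φ x * (π s)⁻¹

/-- `φ : G → G` is affine if it is a group automorphism composed with a left translation. -/
def IsAffineMap {G : Type*} [Group G] (φ : G → G) : Prop :=
  ∃ (α : G ≃* G) (g : G), ∀ x, φ x = α (g * x)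

/-- `G` is CCA if every colour-preserving automorphism of every connected Cayley graph
on `G` is affine. -/
def IsCCA (G : Type*) [Group G] : Prop :=
  ∀ S : Set G, S⁻¹ = S → Subgroup.closure S = ⊤ →
    ∀ φ : Equiv.Perm G, ColourPreserving S ⇑φ → IsAffineMap ⇑φ

/-- `G` is strongly CCA if every colour-permuting automorphism of every connected
Cayley graph on `G` is affine. -/
def IsStronglyCCA (G : Type*) [Group G] : Prop :=
  ∀ S : Set G, S⁻¹ = S → Subgroup.closure S = ⊤ →
    ∀ φ : Equiv.Perm G, ColourPermuting S ⇑φ → IsAffineMap ⇑φ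

section Cyclic
variable {G : Type*} [CommGroup G] [Finite G]

theorem hom_of_cp (hu : ∀ a b : G, a ^ 2 = 1 → b ^ 2 = 1 → a = b ∨ a = 1 ∨ b = 1)
    (S : Set G) (hgen : Subgroup.closure S = ⊤)
    (φ : G → G) (hinj : Function.Injective φ)
    (hcp : ColourPreserving S φ) (h1 : φ 1 = 1) :
    ∀ x y : G, φ (x * y) = φ x * φ y := by
  classical
  set ε : G → G → ℤ := fun s x => if φ (x * s) = φ x * s then 1 else -1 with hεdef
  have hval : ∀ s x, ε s x = 1 ∨ ε s x = -1 := by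
    intro s x; by_cases h : φ (x * s) = φ x * s <;> simp [hεdef, h]
  have hspec : ∀ s ∈ S, ∀ x, φ (x * s) = φ x * s ^ (ε s x) := by
    intro s hs x
    by_cases h : φ (x * s) = φ x * s
    · simp [hεdef, h]
    · have h2 := (hcp x s hs).resolve_left h
      have hε : ε s x = -1 := by simp [hεdef, h]
      rw [hε, zpow_neg_one]; exact h2
  have hsq1 : ∀ s ∈ S, s ^ 2 = 1 → ∀ x, ε s x = 1 := by
    intro s hs h x
    have hss : s⁻¹ = s := by
      rw [inv_eq_iff_mul_eq_one, ← pow_two]; exact h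
    have : φ (x * s) = φ x * s := by
      rcases hcp x s hs with h' | h'
      · exact h'
      · rwa [hss] at h'
    simp [hεdef, this]
  have hstep : ∀ s ∈ S, s ^ 2 ≠ 1 → ∀ x, ε s (x * s) = ε s x := by
    intro s hs hs2 x
    by_contra hne
    have hsum : ε s x + ε s (x * s) = 0 := by
      rcases hval s x with h1' | h1' <;> rcases hval s (x * s) with h2' | h2' <;> omega
    have heq : φ (x * s * s) = φ x := by
      rw [hspec s hs (x * s), hspec s hs x, mul_assoc, ← zpow_add, hsum, zpow_zero, mul_one]
    have hx := hinj heq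
    rw [mul_assoc] at hx
    exact hs2 (by rw [pow_two]; rwa [mul_eq_left] at hx)
  have hstep' : ∀ s ∈ S, s ^ 2 ≠ 1 → ∀ x, ε s (x * s⁻¹) = ε s x := by
    intro s hs hs2 x
    have h' := hstep s hs hs2 (x * s⁻¹)
    rw [inv_mul_cancel_right] at h'
    exact h'.symm
  have hzpow : ∀ s ∈ S, s ^ 2 ≠ 1 → ∀ (k : ℤ) (x : G), ε s (x * s ^ k) = ε s x := by
    intro s hs hs2 k
    induction k using Int.induction_on with
    | zero => intro x; simp
    | succ n ih =>
        intro x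
        have : x * s ^ ((n : ℤ) + 1) = (x * s ^ (n : ℤ)) * s := by
          rw [mul_assoc, zpow_add_one]
        rw [this, hstep s hs hs2, ih]
    | pred n ih =>
        intro x
        have : x * s ^ (-(n : ℤ) - 1) = (x * s ^ (-(n : ℤ))) * s⁻¹ := by
          rw [mul_assoc, zpow_sub_one]
        rw [this, hstep' s hs hs2, ih]
  have hC4 : ∀ s ∈ S, ∀ t ∈ S, ∀ x,
      s ^ ε s x * t ^ ε t (x * s) = t ^ ε t x * s ^ ε s (x * t) := by
    intro s hs t ht x
    have e1 : φ (x * s * t) = φ x * (s ^ ε s x * t ^ ε t (x * s)) := by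
      rw [hspec t ht (x * s), hspec s hs x, mul_assoc]
    have e2 : φ (x * t * s) = φ x * (t ^ ε t x * s ^ ε s (x * t)) := by
      rw [hspec s hs (x * t), hspec t ht x, mul_assoc]
    have hxx : x * s * t = x * t * s := by
      rw [mul_assoc, mul_assoc, mul_comm s t]
    rw [hxx, e2] at e1
    exact (mul_left_cancel e1.symm)
  by_cases hcoh : ∀ s ∈ S, ∀ x y : G, ε s x = ε s y
  · have key : ∀ y x : G, φ (x * y) = φ x * φ y := by
      intro y
      have hy : y ∈ Subgroup.closure S := hgen ▸ Subgroup.mem_top y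
      refine Subgroup.closure_induction (k := S)
        (p := fun y _ => ∀ x, φ (x * y) = φ x * φ y) ?_ ?_ ?_ ?_ hy
      · intro s hs x
        have hφs : φ s = s ^ ε s x := by
          have := hspec s hs 1
          rwa [one_mul, h1, one_mul, hcoh s hs 1 x] at this
        rw [hspec s hs x, hφs]
      · intro x; rw [mul_one, h1, mul_one]
      · intro a b _ _ ha hb x
        rw [← mul_assoc, hb, ha, hb a, mul_assoc]
      · intro a _ ha x
        have hainv : φ a⁻¹ = (φ a)⁻¹ := by
          have := ha a⁻¹
          rw [inv_mul_cancel, h1] at this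
          exact eq_inv_of_mul_eq_one_left this.symm
        have := ha (x * a⁻¹)
        rw [inv_mul_cancel_right] at this
        rw [hainv, this, mul_assoc, mul_inv_cancel, mul_one]
    exact fun x y => key y x
  · exfalso
    push_neg at hcoh
    obtain ⟨s, hs, x₀, y₀, hne0⟩ := hcoh
    have hs2 : s ^ 2 ≠ 1 := fun h => hne0 (by rw [hsq1 s hs h, hsq1 s hs h])
    have hnc : ¬ ∀ t ∈ S, ∀ x, ε s (x * t) = ε s x := by
      intro hc
      apply hne0
      have hconst : ∀ y x : G, ε s (x * y) = ε s x := by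
        intro y
        have hy : y ∈ Subgroup.closure S := hgen ▸ Subgroup.mem_top y
        refine Subgroup.closure_induction (k := S)
          (p := fun y _ => ∀ x, ε s (x * y) = ε s x) ?_ ?_ ?_ ?_ hy
        · exact hc
        · intro x; rw [mul_one]
        · intro a b _ _ ha hb x; rw [← mul_assoc, hb, ha]
        · intro a _ ha x
          have h' := ha (x * a⁻¹)
          rw [inv_mul_cancel_right] at h'
          exact h'.symm
      calc ε s x₀ = ε s (y₀ * (y₀⁻¹ * x₀)) := by rw [mul_inv_cancel_left]
        _ = ε s y₀ := hconst _ _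
    push_neg at hnc
    obtain ⟨t, ht, x, hxt⟩ := hnc
    have hC := hC4 s hs t ht x
    have hds : s ^ (ε s x - ε s (x * t)) = t ^ (ε t x - ε t (x * s)) := by
      rw [zpow_sub, zpow_sub, mul_inv_eq_iff_eq_mul, mul_assoc,
        mul_comm (t ^ ε t (x * s))⁻¹ (s ^ ε s (x * t)), ← mul_assoc, ← hC, mul_assoc,
        mul_inv_cancel, mul_one]
    have hds2 : ε s x - ε s (x * t) = 2 ∨ ε s x - ε s (x * t) = -2 := by
      rcases hval s x with h1' | h1' <;> rcases hval s (x * t) with h2' | h2' <;> omega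
    have hdt0 : ε t x - ε t (x * s) ≠ 0 := by
      intro h0
      rw [h0, zpow_zero] at hds
      rcases hds2 with h | h <;> rw [h] at hds
      · exact hs2 (by rw [← zpow_natCast] ; exact_mod_cast hds)
      · apply hs2
        have : s ^ (2 : ℤ) = 1 := by
          rw [← inv_inj, ← zpow_neg, inv_one]; exact hds
        rw [← zpow_natCast]; exact_mod_cast this
    have hdt2 : ε t x - ε t (x * s) = 2 ∨ ε t x - ε t (x * s) = -2 := by
      rcases hval t x with h1' | h1' <;> rcases hval t (x * s) with h2' | h2' <;> omega
    have ht2 : t ^ 2 ≠ 1 := by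
      intro h
      exact hdt0 (by rw [hsq1 t ht h, hsq1 t ht h]; ring)
    have hts : t ∉ Subgroup.zpowers s := by
      intro hmem
      obtain ⟨k, hk⟩ := Subgroup.mem_zpowers_iff.mp hmem
      exact hxt (by rw [← hk, hzpow s hs hs2 k x])
    have hst : s ∉ Subgroup.zpowers t := by
      intro hmem
      obtain ⟨k, hk⟩ := Subgroup.mem_zpowers_iff.mp hmem
      apply hdt0
      rw [← hk, hzpow t ht ht2 k x]; ring
    have hsqtq : s ^ (2:ℤ) = t ^ (2:ℤ) ∨ s ^ (2:ℤ) = t ^ (-2:ℤ) := by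
      rcases hds2 with h | h <;> rcases hdt2 with h' | h' <;> rw [h, h'] at hds
      · exact Or.inl hds
      · exact Or.inr hds
      · right
        rw [← inv_inj, ← zpow_neg, ← zpow_neg] at hds
        simpa using hds
      · left
        rw [← inv_inj, ← zpow_neg, ← zpow_neg] at hds
        simpa using hds
    have hsq' : s ^ 2 = t ^ 2 ∨ s ^ 2 = (t ^ 2)⁻¹ := by
      rcases hsqtq with h | h
      · left; rw [← zpow_natCast s, ← zpow_natCast t]; exact_mod_cast h
      · right; rw [← zpow_natCast s, ← zpow_natCast t, ← zpow_neg]; exact_mod_cast h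
    set m := orderOf s with hm
    have hmpos : 0 < m := orderOf_pos s
    rcases Nat.even_or_odd m with heven | hodd
    · -- even case
      obtain ⟨k, hk⟩ := heven
      have hkpos : k ≠ 0 := by omega
      have hklt : k < m := by omega
      set z := s ^ k with hz
      have hz1 : z ≠ 1 := pow_ne_one_of_lt_orderOf hkpos hklt
      have hz2 : z ^ 2 = 1 := by
        rw [hz, ← pow_mul]
        have : k * 2 = m := by omega
        rw [this, pow_orderOf_eq_one]
      have hsk : s ^ k ∈ Subgroup.zpowers s := Subgroup.mem_zpowers_iff.mpr ⟨(k : ℤ), by simp⟩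
      rcases hsq' with hcase | hcase
      · set d := s * t⁻¹ with hd
        have hd2 : d ^ 2 = 1 := by
          rw [hd, mul_pow, inv_pow, hcase, mul_inv_cancel]
        rcases hu z d hz2 hd2 with hzd | hz1' | hd1
        · apply hts
          have : t = z⁻¹ * s := by
            rw [hzd, hd]; group
          rw [this, hz]
          exact Subgroup.mul_mem _ (Subgroup.inv_mem _ hsk) (Subgroup.mem_zpowers s)
        · exact hz1 hz1'
        · apply hst
          have : s = t := by
            have := hd1
            rw [hd, mul_inv_eq_one] at this
            exact this
          rw [this]; exact Subgroup.mem_zpowers t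
      · set d := s * t with hd
        have hd2 : d ^ 2 = 1 := by
          rw [hd, mul_pow, hcase, inv_mul_cancel]
        rcases hu z d hz2 hd2 with hzd | hz1' | hd1
        · apply hts
          have : t = s⁻¹ * z := by
            rw [hzd, hd]; group
          rw [this, hz]
          exact Subgroup.mul_mem _ (Subgroup.inv_mem _ (Subgroup.mem_zpowers s)) hsk
        · exact hz1 hz1'
        · apply hts
          have : t = s⁻¹ := by
            rw [hd, mul_eq_one_iff_eq_inv] at hd1
            rw [hd1, inv_inv]
          rw [this]
          exact Subgroup.inv_mem _ (Subgroup.mem_zpowers s)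
    · -- odd case
      obtain ⟨u, hu'⟩ := hodd
      have hself : s = (s ^ 2) ^ (u + 1) := by
        rw [← pow_mul]
        have : 2 * (u + 1) = m + 1 := by omega
        rw [this, pow_succ, pow_orderOf_eq_one, one_mul]
      apply hst
      rcases hsq' with hcase | hcase
      · rw [hself, hcase, ← pow_mul]
        exact Subgroup.mem_zpowers_iff.mpr ⟨((2 * (u+1) : ℕ) : ℤ), by norm_cast⟩
      · rw [hself, hcase, inv_pow, ← pow_mul]
        exact Subgroup.inv_mem _ (Subgroup.mem_zpowers_iff.mpr ⟨((2 * (u+1) : ℕ) : ℤ), by norm_cast⟩)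

theorem isCCA_of_uniqueInv (hu : ∀ a b : G, a ^ 2 = 1 → b ^ 2 = 1 → a = b ∨ a = 1 ∨ b = 1) :
    IsCCA G := by
  intro S hS hgen φ hcp
  set ψ : G → G := fun x => (φ 1)⁻¹ * φ x with hψ
  have hψcp : ColourPreserving S ψ := by
    intro x s hs
    rcases hcp x s hs with h | h
    · left; show (φ 1)⁻¹ * φ (x * s) = (φ 1)⁻¹ * φ x * s; rw [h, mul_assoc]
    · right; show (φ 1)⁻¹ * φ (x * s) = (φ 1)⁻¹ * φ x * s⁻¹; rw [h, mul_assoc]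
  have hψinj : Function.Injective ψ := by
    intro a b h
    exact φ.injective (mul_left_cancel h)
  have hψ1 : ψ 1 = 1 := by rw [hψ]; simp
  have hom := hom_of_cp hu S hgen ψ hψinj hψcp hψ1
  have hbij : Function.Bijective ψ := Finite.injective_iff_bijective.mp hψinj
  let α := MulEquiv.ofBijective (MonoidHom.mk' ψ (fun a b => hom a b)) hbij
  refine ⟨α, α.symm (φ 1), fun x => ?_⟩
  have h2 : α (α.symm (φ 1) * x) = φ 1 * α x := by
    rw [map_mul, MulEquiv.apply_symm_apply]
  rw [h2]
  show φ x = φ 1 * ((φ 1)⁻¹ * φ x)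
  rw [mul_inv_cancel_left]
end Cyclic

theorem isCCA_of_mulEquiv {G H : Type*} [Group G] [Group H] (e : G ≃* H) (h : IsCCA G) :
    IsCCA H := by
  intro S hS hgen φ hcp
  set S' : Set G := e.symm '' S with hS'
  have hS'inv : S'⁻¹ = S' := by
    ext x
    constructor
    · intro hx
      rw [Set.mem_inv] at hx
      obtain ⟨y, hy, hxy⟩ := hx
      refine ⟨y⁻¹, ?_, by rw [map_inv, hxy, inv_inv]⟩
      have := Set.inv_mem_inv.mpr hy
      rwa [hS] at this
    · rintro ⟨y, hy, rfl⟩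
      rw [Set.mem_inv, ← map_inv]
      refine ⟨y⁻¹, ?_, rfl⟩
      have := Set.inv_mem_inv.mpr hy
      rwa [hS] at this
  have hgen' : Subgroup.closure S' = ⊤ := by
    have h1 : Subgroup.map e.symm.toMonoidHom (Subgroup.closure S) = Subgroup.closure S' := by
      rw [MonoidHom.map_closure]; rfl
    rw [← h1, hgen, Subgroup.map_top_of_surjective _ e.symm.surjective]
  set φ' : Equiv.Perm G := e.toEquiv.trans (φ.trans e.symm.toEquiv) with hφ'
  have hcp' : ColourPreserving S' ⇑φ' := by
    rintro x s ⟨y, hy, rfl⟩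
    rcases hcp (e x) y hy with h' | h'
    · left
      show e.symm (φ (e (x * e.symm y))) = e.symm (φ (e x)) * e.symm y
      rw [map_mul, e.apply_symm_apply, h', map_mul]
    · right
      show e.symm (φ (e (x * e.symm y))) = e.symm (φ (e x)) * (e.symm y)⁻¹
      rw [map_mul, e.apply_symm_apply, h', map_mul, map_inv]
  obtain ⟨α, g, hα⟩ := h S' hS'inv hgen' φ' hcp'
  refine ⟨(e.symm.trans α).trans e, e g, fun y => ?_⟩
  have h3 := hα (e.symm y)
  have h4 : φ' (e.symm y) = e.symm (φ y) := by
    rw [hφ']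
    simp
  rw [h4] at h3
  have h5 : φ y = e (α (g * e.symm y)) := by rw [← h3, e.apply_symm_apply]
  rw [h5]
  simp only [MulEquiv.trans_apply, map_mul, e.symm_apply_apply]

theorem affine_of_translate_hom {G : Type*} [Group G] [Finite G] (φ : Equiv.Perm G)
    (h : ∀ x y : G, (φ 1)⁻¹ * φ (x * y) = ((φ 1)⁻¹ * φ x) * ((φ 1)⁻¹ * φ y)) :
    IsAffineMap ⇑φ := by
  set ψ : G → G := fun x => (φ 1)⁻¹ * φ x with hψ
  have hψinj : Function.Injective ψ := fun a b hab => φ.injective (mul_left_cancel hab)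
  have hbij : Function.Bijective ψ := Finite.injective_iff_bijective.mp hψinj
  let α := MulEquiv.ofBijective (MonoidHom.mk' ψ (fun a b => h a b)) hbij
  refine ⟨α, α.symm (φ 1), fun x => ?_⟩
  have h2 : α (α.symm (φ 1) * x) = φ 1 * α x := by
    rw [map_mul, MulEquiv.apply_symm_apply]
  rw [h2]
  show φ x = φ 1 * ((φ 1)⁻¹ * φ x)
  rw [mul_inv_cancel_left]

section Dihedral
variable {D : Type} [Group D] [Finite D] (A : Subgroup D) (σ : D)

set_option maxHeartbeats 2000000 in
theorem genDihedral_cca_of_cca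
    (hcomm : ∀ a b : A, a * b = b * a) (hindex : A.index = 2) (hσA : σ ∉ A)
    (hσ2 : σ ^ 2 = 1) (hconj : ∀ a ∈ A, σ * a * σ⁻¹ = a⁻¹)
    (hA : IsCCA A) : IsCCA D := by
  have hnotA : ∀ {x y : D}, x * y ∈ A ↔ (x ∈ A ↔ y ∈ A) :=
    fun {x y} => Subgroup.mul_mem_iff_of_index_two hindex
  have hσinv : σ⁻¹ = σ := by
    rw [inv_eq_iff_mul_eq_one, ← pow_two]; exact hσ2
  have hflipconj : ∀ f : D, f ∉ A → ∀ a ∈ A, f * a * f = a⁻¹ := by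
    intro f hf a ha
    have hb : σ * f ∈ A := hnotA.mpr (iff_of_false hσA hf)
    have hfσ : f = σ * (σ * f) := by
      rw [← mul_assoc, ← pow_two, hσ2, one_mul]
    calc f * a * f = σ * ((σ * f) * a) * σ⁻¹ * (σ * f) := by
          rw [hσinv]; rw (occs := .pos [1, 2]) [hfσ]; group
      _ = ((σ * f) * a)⁻¹ * (σ * f) := by rw [hconj _ (Subgroup.mul_mem _ hb ha)]
      _ = a⁻¹ := by rw [mul_inv_rev, mul_assoc, inv_mul_cancel, mul_one]
  have hflip2 : ∀ f : D, f ∉ A → f * f = 1 := by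
    intro f hf
    have := hflipconj f hf 1 (Subgroup.one_mem A)
    rwa [mul_one, inv_one] at this
  have hflipinv : ∀ f : D, f ∉ A → f⁻¹ = f := by
    intro f hf
    rw [inv_eq_iff_mul_eq_one]; exact hflip2 f hf
  have hswap : ∀ f : D, f ∉ A → ∀ a ∈ A, f * a = a⁻¹ * f := by
    intro f hf a ha
    calc f * a = (f * a * f) * f := by
          rw [mul_assoc, hflip2 f hf, mul_one]
      _ = a⁻¹ * f := by rw [hflipconj f hf a ha]
  intro S hS hgen φ hcp
  have hSinv : ∀ s ∈ S, s⁻¹ ∈ S := by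
    intro s hs
    have : s⁻¹ ∈ S⁻¹ := Set.inv_mem_inv.mpr hs
    rwa [hS] at this
  set ψ : D → D := fun x => (φ 1)⁻¹ * φ x with hψ
  have hψcp : ColourPreserving S ψ := by
    intro x s hs
    rcases hcp x s hs with h | h
    · left; show (φ 1)⁻¹ * φ (x * s) = (φ 1)⁻¹ * φ x * s; rw [h, mul_assoc]
    · right; show (φ 1)⁻¹ * φ (x * s) = (φ 1)⁻¹ * φ x * s⁻¹; rw [h, mul_assoc]
  have hψinj : Function.Injective ψ := fun a b hab => φ.injective (mul_left_cancel hab)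
  have hψ1 : ψ 1 = 1 := by rw [hψ]; simp
  -- coset preservation
  have hcoset : ∀ y x : D, (ψ (x * y) ∈ A ↔ (ψ x ∈ A ↔ y ∈ A)) := by
    intro y
    have hy : y ∈ Subgroup.closure S := hgen ▸ Subgroup.mem_top y
    refine Subgroup.closure_induction (k := S)
      (p := fun y _ => ∀ x, (ψ (x * y) ∈ A ↔ (ψ x ∈ A ↔ y ∈ A))) ?_ ?_ ?_ ?_ hy
    · intro s hs x
      rcases hψcp x s hs with h | h
      · rw [h]; exact hnotA
      · rw [h]
        have h1 : ψ x * s⁻¹ ∈ A ↔ (ψ x ∈ A ↔ s⁻¹ ∈ A) := hnotA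
        have h2 : s⁻¹ ∈ A ↔ s ∈ A := Subgroup.inv_mem_iff A
        tauto
    · intro x
      rw [mul_one]
      have := Subgroup.one_mem A
      tauto
    · intro a b _ _ ha hb x
      rw [← mul_assoc, hb, ha]
      have h1 : a * b ∈ A ↔ (a ∈ A ↔ b ∈ A) := hnotA
      tauto
    · intro a _ ha x
      have h' := ha (x * a⁻¹)
      rw [inv_mul_cancel_right] at h'
      rw [Subgroup.inv_mem_iff]
      tauto
  have hψA : ∀ x : D, ψ x ∈ A ↔ x ∈ A := by
    intro x
    have h' := hcoset x 1
    rw [one_mul, hψ1] at h'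
    have := Subgroup.one_mem A
    tauto
  -- a flip in S
  have hflipex : ∃ τ ∈ S, τ ∉ A := by
    by_contra hno
    push_neg at hno
    have hle : Subgroup.closure S ≤ A := (Subgroup.closure_le A).mpr hno
    rw [hgen] at hle
    exact hσA (hle (Subgroup.mem_top σ))
  obtain ⟨τ, hτS, hτA⟩ := hflipex
  have hflipeq : ∀ f ∈ S, f ∉ A → ∀ x, ψ (x * f) = ψ x * f := by
    intro f hfS hfA x
    rcases hψcp x f hfS with h | h
    · exact h
    · rwa [hflipinv f hfA] at h
  -- the connection set on A
  set T : Set A := {t | (t : D) ∈ S ∨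
    ∃ f g : D, f ∈ S ∧ f ∉ A ∧ g ∈ S ∧ g ∉ A ∧ (t : D) = f * g} with hT
  have hTsymm : ∀ t : A, t ∈ T → t⁻¹ ∈ T := by
    rintro t (h | ⟨f, g, hfS, hfA, hgS, hgA, hfg⟩)
    · left; exact hSinv _ h
    · right
      exact ⟨g⁻¹, f⁻¹, hSinv _ hgS, fun hc => hgA (by simpa using Subgroup.inv_mem A hc),
        hSinv _ hfS, fun hc => hfA (by simpa using Subgroup.inv_mem A hc),
        by rw [← mul_inv_rev, ← hfg]; rfl⟩
  have hTinv : T⁻¹ = T := by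
    ext t
    rw [Set.mem_inv]
    constructor
    · intro h; have := hTsymm _ h; rwa [inv_inv] at this
    · intro h; exact hTsymm _ h
  -- T generates A
  have hTgen : Subgroup.closure T = ⊤ := by
    set E : Subgroup D := Subgroup.map A.subtype (Subgroup.closure T) with hE
    have hET : ∀ t : A, t ∈ T → (t : D) ∈ E :=
      fun t ht => Subgroup.mem_map.mpr ⟨t, Subgroup.subset_closure ht, rfl⟩
    have hP : ∀ y : D, (∀ hy : y ∈ A, y ∈ E ∧ y⁻¹ ∈ E) ∧
        (y ∉ A → y * τ ∈ E ∧ y⁻¹ * τ ∈ E) := by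
      intro y
      have hy : y ∈ Subgroup.closure S := hgen ▸ Subgroup.mem_top y
      refine Subgroup.closure_induction (k := S)
        (p := fun y _ => (∀ hy : y ∈ A, y ∈ E ∧ y⁻¹ ∈ E) ∧
          (y ∉ A → y * τ ∈ E ∧ y⁻¹ * τ ∈ E)) ?_ ?_ ?_ ?_ hy
      · intro s hs
        constructor
        · intro hsA
          have h1 : (⟨s, hsA⟩ : A) ∈ T := Or.inl hs
          have h2 : (⟨s⁻¹, Subgroup.inv_mem A hsA⟩ : A) ∈ T := Or.inl (hSinv s hs)
          exact ⟨hET _ h1, hET _ h2⟩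
        · intro hsA
          have hm1 : s * τ ∈ A := hnotA.mpr (iff_of_false hsA hτA)
          have hm2 : s⁻¹ * τ ∈ A := hnotA.mpr
            (iff_of_false (fun hc => hsA (by simpa using Subgroup.inv_mem A hc)) hτA)
          have h1 : (⟨s * τ, hm1⟩ : A) ∈ T := Or.inr ⟨s, τ, hs, hsA, hτS, hτA, rfl⟩
          have h2 : (⟨s⁻¹ * τ, hm2⟩ : A) ∈ T := Or.inr ⟨s⁻¹, τ, hSinv s hs,
            fun hc => hsA (by simpa using Subgroup.inv_mem A hc), hτS, hτA, rfl⟩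
          exact ⟨hET _ h1, hET _ h2⟩
      · refine ⟨fun _ => ⟨Subgroup.one_mem E, by simpa using Subgroup.one_mem E⟩, fun hc => absurd (Subgroup.one_mem A) hc⟩
      · intro a b _ _ ha hb
        by_cases haA : a ∈ A <;> by_cases hbA : b ∈ A
        · have h1 := (ha.1 haA).1
          have h2 := (hb.1 hbA).1
          have h1' := (ha.1 haA).2
          have h2' := (hb.1 hbA).2
          refine ⟨fun _ => ⟨Subgroup.mul_mem E h1 h2, by
            rw [mul_inv_rev]; exact Subgroup.mul_mem E h2' h1'⟩, fun hc => absurd (hnotA.mpr (iff_of_true haA hbA)) hc⟩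
        · -- a ∈ A, b ∉ A
          have hab : a * b ∉ A := fun hc => hbA ((hnotA.mp hc).mp haA)
          refine ⟨fun hc => absurd hc hab, fun _ => ?_⟩
          constructor
          · have key : a * b * τ = a * (b * τ) := by rw [mul_assoc]
            rw [key]
            exact Subgroup.mul_mem E (ha.1 haA).1 (hb.2 hbA).1
          · have key : (a * b)⁻¹ * τ = (b⁻¹ * τ) * a := by
              rw [mul_assoc, hswap τ hτA a haA, ← mul_assoc, ← mul_inv_rev]
            rw [key]
            exact Subgroup.mul_mem E (hb.2 hbA).2 (ha.1 haA).1
        · -- a ∉ A, b ∈ A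
          have hab : a * b ∉ A := fun hc => haA ((hnotA.mp hc).mpr hbA)
          refine ⟨fun hc => absurd hc hab, fun _ => ?_⟩
          constructor
          · have hb' : b⁻¹ ∈ A := Subgroup.inv_mem A hbA
            have key : a * b * τ = (a * τ) * b⁻¹ := by
              have h' := hswap τ hτA b⁻¹ hb'
              rw [inv_inv] at h'
              rw [mul_assoc, ← h', ← mul_assoc]
            rw [key]
            exact Subgroup.mul_mem E (ha.2 haA).1 (hb.1 hbA).2
          · have key : (a * b)⁻¹ * τ = b⁻¹ * (a⁻¹ * τ) := by
              rw [mul_inv_rev, mul_assoc]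
            rw [key]
            exact Subgroup.mul_mem E (hb.1 hbA).2 (ha.2 haA).2
        · -- a ∉ A, b ∉ A
          have hab : a * b ∈ A := hnotA.mpr (iff_of_false haA hbA)
          refine ⟨fun _ => ?_, fun hc => absurd hab hc⟩
          have hbinv : b⁻¹ = b := hflipinv b hbA
          have hτinv : τ⁻¹ = τ := hflipinv τ hτA
          constructor
          · have key : (a * τ) * (b⁻¹ * τ)⁻¹ = a * b := by
              rw [mul_inv_rev, inv_inv, hτinv, mul_assoc, ← mul_assoc τ τ b,
                hflip2 τ hτA, one_mul]
            rw [← key]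
            exact Subgroup.mul_mem E (ha.2 haA).1 (Subgroup.inv_mem E (hb.2 hbA).2)
          · have key : (b⁻¹ * τ) * (a * τ)⁻¹ = (a * b)⁻¹ := by
              rw [mul_inv_rev a τ, hτinv, mul_assoc, ← mul_assoc τ τ a⁻¹,
                hflip2 τ hτA, one_mul, mul_inv_rev]
            rw [← key]
            exact Subgroup.mul_mem E (hb.2 hbA).2 (Subgroup.inv_mem E (ha.2 haA).1)
      · intro a _ ha
        constructor
        · intro haA'
          have haA : a ∈ A := by simpa using Subgroup.inv_mem A haA'
          refine ⟨(ha.1 haA).2, ?_⟩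
          rw [inv_inv]; exact (ha.1 haA).1
        · intro haA'
          have haA : a ∉ A := fun hc => haA' (Subgroup.inv_mem A hc)
          refine ⟨(ha.2 haA).2, ?_⟩
          rw [inv_inv]; exact (ha.2 haA).1
    rw [Subgroup.eq_top_iff']
    intro a
    have h1 := ((hP (a : D)).1 a.2).1
    obtain ⟨b, hbT, hbeq⟩ := Subgroup.mem_map.mp h1
    have : b = a := Subtype.ext hbeq
    rwa [← this]
  -- the restricted map
  have hmemψ : ∀ a : A, ψ (a : D) ∈ A := fun a => (hψA a).mpr a.2
  set Φ : A → A := fun a => ⟨ψ (a : D), hmemψ a⟩ with hΦ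
  have hΦcp : ColourPreserving T Φ := by
    rintro a t (h | ⟨f, g, hfS, hfA, hgS, hgA, hfg⟩)
    · rcases hψcp (a : D) (t : D) h with h' | h'
      · left; exact Subtype.ext h'
      · right; exact Subtype.ext h'
    · left
      refine Subtype.ext ?_
      show ψ ((a : D) * (t : D)) = ψ (a : D) * (t : D)
      rw [hfg, ← mul_assoc, hflipeq g hgS hgA, hflipeq f hfS hfA, mul_assoc]
  have hΦinj : Function.Injective Φ := by
    intro a b hab
    exact Subtype.ext (hψinj (congrArg Subtype.val hab))
  have hΦbij : Function.Bijective Φ := Finite.injective_iff_bijective.mp hΦinj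
  obtain ⟨α, g, hαg⟩ := hA T hTinv hTgen (Equiv.ofBijective Φ hΦbij) hΦcp
  have hΦ1 : Φ 1 = 1 := Subtype.ext (by exact hψ1)
  have hg1 : g = 1 := by
    apply α.injective
    have h0 := hαg 1
    rw [mul_one] at h0
    have h1 : (Equiv.ofBijective Φ hΦbij) 1 = Φ 1 := rfl
    rw [h1, hΦ1] at h0
    rw [← h0, map_one]
  have hΦα : ∀ a : A, Φ a = α a := by
    intro a
    have h0 := hαg a
    rw [hg1, one_mul] at h0
    have h1 : (Equiv.ofBijective Φ hΦbij) a = Φ a := rfl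
    rw [h1] at h0
    exact h0
  -- reconstruct
  have hAeq : ∀ (d : D) (hd : d ∈ A), ψ d = ↑(α ⟨d, hd⟩) :=
    fun d hd => congrArg Subtype.val (hΦα ⟨d, hd⟩)
  have hτflip : ∀ x, ψ (x * τ) = ψ x * τ := hflipeq τ hτS hτA
  have hτinv : τ⁻¹ = τ := hflipinv τ hτA
  have hmemxτ : ∀ x : D, x ∉ A → x * τ ∈ A := fun x hx => hnotA.mpr (iff_of_false hx hτA)
  have hoff : ∀ (x : D) (hx : x ∉ A), ψ x = ↑(α ⟨x * τ, hmemxτ x hx⟩) * τ := by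
    intro x hx
    have h1 := hτflip (x * τ)
    rw [mul_assoc, hflip2 τ hτA, mul_one] at h1
    rw [hAeq (x * τ) (hmemxτ x hx)] at h1
    exact h1
  have hαmul : ∀ (c d : D) (hc : c ∈ A) (hd : d ∈ A),
      (↑(α ⟨c * d, Subgroup.mul_mem A hc hd⟩) : D) = ↑(α ⟨c, hc⟩) * ↑(α ⟨d, hd⟩) := by
    intro c d hc hd
    have h1 : (⟨c * d, Subgroup.mul_mem A hc hd⟩ : A) = ⟨c, hc⟩ * ⟨d, hd⟩ := rfl
    rw [h1, map_mul]; rfl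
  have hαinv : ∀ (c : D) (hc : c ∈ A),
      (↑(α ⟨c⁻¹, Subgroup.inv_mem A hc⟩) : D) = (↑(α ⟨c, hc⟩) : D)⁻¹ := by
    intro c hc
    have h1 : (⟨c⁻¹, Subgroup.inv_mem A hc⟩ : A) = (⟨c, hc⟩)⁻¹ := rfl
    rw [h1, map_inv]; rfl
  -- ψ is a homomorphism
  have hhom : ∀ x y : D, ψ (x * y) = ψ x * ψ y := by
    intro x y
    by_cases hx : x ∈ A <;> by_cases hy : y ∈ A
    · have hxy : x * y ∈ A := Subgroup.mul_mem A hx hy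
      rw [hAeq (x * y) hxy, hAeq x hx, hAeq y hy, hαmul x y hx hy]
    · -- x ∈ A, y ∉ A
      have hxy : x * y ∉ A := fun hc => hy ((hnotA.mp hc).mp hx)
      rw [hoff (x * y) hxy, hoff y hy]
      have h1 : (x * y) * τ = x * (y * τ) := by rw [mul_assoc]
      have h2 : (⟨x * y * τ, hmemxτ _ hxy⟩ : A) = ⟨x, hx⟩ * ⟨y * τ, hmemxτ y hy⟩ :=
        Subtype.ext h1
      rw [h2, map_mul, hAeq x hx]
      show (↑(α ⟨x, hx⟩) * ↑(α ⟨y * τ, hmemxτ y hy⟩) : D) * τ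
        = ↑(α ⟨x, hx⟩) * (↑(α ⟨y * τ, hmemxτ y hy⟩) * τ)
      rw [mul_assoc]
    · -- x ∉ A, y ∈ A
      have hxy : x * y ∉ A := fun hc => hx ((hnotA.mp hc).mpr hy)
      rw [hoff (x * y) hxy, hoff x hx, hAeq y hy]
      have hswapy : y * τ = τ * y⁻¹ := by
        have h' := hswap τ hτA y⁻¹ (Subgroup.inv_mem A hy)
        rw [inv_inv] at h'
        exact h'.symm
      have h1 : (x * y) * τ = (x * τ) * y⁻¹ := by
        rw [mul_assoc, hswapy, ← mul_assoc]
      have h2 : (⟨x * y * τ, hmemxτ _ hxy⟩ : A)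
          = ⟨x * τ, hmemxτ x hx⟩ * (⟨y, hy⟩)⁻¹ := Subtype.ext h1
      rw [h2, map_mul, map_inv]
      have h3 : τ * ↑(α ⟨y, hy⟩) = (↑(α ⟨y, hy⟩) : D)⁻¹ * τ := hswap τ hτA _ (α ⟨y, hy⟩).2
      show (↑(α ⟨x * τ, hmemxτ x hx⟩ * (α ⟨y, hy⟩)⁻¹) : D) * τ
        = ↑(α ⟨x * τ, hmemxτ x hx⟩) * τ * ↑(α ⟨y, hy⟩)
      rw [mul_assoc, h3, Subgroup.coe_mul, ← mul_assoc]
      norm_cast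
    · -- x ∉ A, y ∉ A
      have hxy : x * y ∈ A := hnotA.mpr (iff_of_false hx hy)
      rw [hAeq (x * y) hxy, hoff x hx, hoff y hy]
      have hyinv : y⁻¹ = y := hflipinv y hy
      have h1 : x * y = (x * τ) * (y * τ)⁻¹ := by
        rw [mul_inv_rev, hτinv, mul_assoc, ← mul_assoc τ τ y⁻¹, hflip2 τ hτA,
          one_mul, hyinv]
      have h2 : (⟨x * y, hxy⟩ : A)
          = ⟨x * τ, hmemxτ x hx⟩ * (⟨y * τ, hmemxτ y hy⟩)⁻¹ := Subtype.ext h1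
      rw [h2, map_mul, map_inv]
      have h3 : τ * ↑(α ⟨y * τ, hmemxτ y hy⟩) = (↑(α ⟨y * τ, hmemxτ y hy⟩) : D)⁻¹ * τ :=
        hswap τ hτA _ (α ⟨y * τ, hmemxτ y hy⟩).2
      show (↑(α ⟨x * τ, hmemxτ x hx⟩ * (α ⟨y * τ, hmemxτ y hy⟩)⁻¹) : D)
        = ↑(α ⟨x * τ, hmemxτ x hx⟩) * τ * (↑(α ⟨y * τ, hmemxτ y hy⟩) * τ)
      rw [Subgroup.coe_mul, mul_assoc, ← mul_assoc τ _ τ, h3, mul_assoc, hflip2 τ hτA,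
        mul_one]
      norm_cast
  exact affine_of_translate_hom φ hhom
set_option maxHeartbeats 2000000 in
theorem genDihedral_cca_to_cca
    (hcomm : ∀ a b : A, a * b = b * a) (hindex : A.index = 2) (hσA : σ ∉ A)
    (hσ2 : σ ^ 2 = 1) (hconj : ∀ a ∈ A, σ * a * σ⁻¹ = a⁻¹)
    (hD : IsCCA D) : IsCCA A := by
  classical
  have hnotA : ∀ {x y : D}, x * y ∈ A ↔ (x ∈ A ↔ y ∈ A) :=
    fun {x y} => Subgroup.mul_mem_iff_of_index_two hindex
  have hσinv : σ⁻¹ = σ := by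
    rw [inv_eq_iff_mul_eq_one, ← pow_two]; exact hσ2
  have hσσ : σ * σ = 1 := by rw [← pow_two]; exact hσ2
  have hσc : ∀ a ∈ A, σ * a * σ = a⁻¹ := by
    intro a ha
    have h := hconj a ha
    rwa [hσinv] at h
  have hflipconj : ∀ f : D, f ∉ A → ∀ a ∈ A, f * a * f = a⁻¹ := by
    intro f hf a ha
    have hb : σ * f ∈ A := hnotA.mpr (iff_of_false hσA hf)
    have hfσ : f = σ * (σ * f) := by
      rw [← mul_assoc, hσσ, one_mul]
    calc f * a * f = σ * ((σ * f) * a) * σ⁻¹ * (σ * f) := by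
          rw [hσinv]; rw (occs := .pos [1, 2]) [hfσ]; group
      _ = ((σ * f) * a)⁻¹ * (σ * f) := by rw [hconj _ (Subgroup.mul_mem _ hb ha)]
      _ = a⁻¹ := by rw [mul_inv_rev, mul_assoc, inv_mul_cancel, mul_one]
  have hflip2 : ∀ f : D, f ∉ A → f * f = 1 := by
    intro f hf
    have := hflipconj f hf 1 (Subgroup.one_mem A)
    rwa [mul_one, inv_one] at this
  have hflipinv : ∀ f : D, f ∉ A → f⁻¹ = f := by
    intro f hf
    rw [inv_eq_iff_mul_eq_one]; exact hflip2 f hf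
  have hswap : ∀ f : D, f ∉ A → ∀ a ∈ A, f * a = a⁻¹ * f := by
    intro f hf a ha
    calc f * a = (f * a * f) * f := by
          rw [mul_assoc, hflip2 f hf, mul_one]
      _ = a⁻¹ * f := by rw [hflipconj f hf a ha]
  have hcommD : ∀ a b : D, a ∈ A → b ∈ A → a * b = b * a := by
    intro a b ha hb
    have h := congrArg Subtype.val (hcomm ⟨a, ha⟩ ⟨b, hb⟩)
    simpa using h
  intro T hT hTgen ψ hcp
  have hTsymm : ∀ t : A, t ∈ T → t⁻¹ ∈ T := by
    intro t ht
    have : t⁻¹ ∈ T⁻¹ := Set.inv_mem_inv.mpr ht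
    rwa [hT] at this
  set S : Set D := (fun a : A => (a : D)) '' T ∪ {σ} with hSdef
  have hσS : σ ∈ S := Or.inr rfl
  have hSsymm : ∀ d ∈ S, d⁻¹ ∈ S := by
    rintro d (⟨t, ht, rfl⟩ | hd)
    · exact Or.inl ⟨t⁻¹, hTsymm t ht, rfl⟩
    · rw [Set.mem_singleton_iff] at hd
      rw [hd, hσinv]
      exact hσS
  have hSinv : S⁻¹ = S := by
    ext d
    rw [Set.mem_inv]
    constructor
    · intro h; have := hSsymm _ h; rwa [inv_inv] at this
    · intro h; exact hSsymm _ h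
  have hSgen : Subgroup.closure S = ⊤ := by
    have hAsub : ∀ a : D, a ∈ A → a ∈ Subgroup.closure S := by
      intro a ha
      have h1 : (⟨a, ha⟩ : A) ∈ Subgroup.closure T := hTgen ▸ Subgroup.mem_top _
      have h2 : a ∈ Subgroup.map A.subtype (Subgroup.closure T) :=
        Subgroup.mem_map.mpr ⟨⟨a, ha⟩, h1, rfl⟩
      rw [MonoidHom.map_closure] at h2
      refine Subgroup.closure_mono ?_ h2
      intro z hz
      obtain ⟨t, ht, rfl⟩ := hz
      exact Or.inl ⟨t, ht, rfl⟩
    rw [Subgroup.eq_top_iff']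
    intro d
    by_cases hd : d ∈ A
    · exact hAsub d hd
    · have hb : σ * d ∈ A := hnotA.mpr (iff_of_false hσA hd)
      have : d = σ * (σ * d) := by rw [← mul_assoc, hσσ, one_mul]
      rw [this]
      exact Subgroup.mul_mem _ (Subgroup.subset_closure hσS) (hAsub _ hb)
  have hmem2 : ∀ d : D, d ∉ A → (σ * d)⁻¹ ∈ A :=
    fun d hd => Subgroup.inv_mem A (hnotA.mpr (iff_of_false hσA hd))
  set φ : D → D := fun d =>
    if h : d ∈ A then (ψ ⟨d, h⟩ : D) else σ * (ψ ⟨(σ * d)⁻¹, hmem2 d h⟩ : D)⁻¹ with hφdef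
  have hφin : ∀ (d : D) (h : d ∈ A), φ d = (ψ ⟨d, h⟩ : D) := by
    intro d h; rw [hφdef]; exact dif_pos h
  have hφout : ∀ (d : D) (h : d ∉ A), φ d = σ * (ψ ⟨(σ * d)⁻¹, hmem2 d h⟩ : D)⁻¹ := by
    intro d h; rw [hφdef]; exact dif_neg h
  have hφoutA : ∀ (d : D), d ∉ A → φ d ∉ A := by
    intro d h
    rw [hφout d h]
    intro hc
    have h1 : ((ψ ⟨(σ * d)⁻¹, hmem2 d h⟩ : D))⁻¹ ∈ A := Subgroup.inv_mem A (ψ _).2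
    exact hσA ((hnotA.mp hc).mpr h1)
  have hφinA : ∀ (d : D), d ∈ A → φ d ∈ A := by
    intro d h; rw [hφin d h]; exact (ψ _).2
  have hφinj : Function.Injective φ := by
    intro c d hcd
    by_cases hc : c ∈ A <;> by_cases hd : d ∈ A
    · rw [hφin c hc, hφin d hd] at hcd
      have h2 : (⟨c, hc⟩ : A) = ⟨d, hd⟩ := ψ.injective (Subtype.ext hcd)
      exact congrArg Subtype.val h2
    · exact absurd (hcd ▸ hφinA c hc) (hφoutA d hd)
    · exact absurd (hcd.symm ▸ hφinA d hd) (hφoutA c hc)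
    · rw [hφout c hc, hφout d hd] at hcd
      have h1 := mul_left_cancel hcd
      have h2 := inv_injective h1
      have h3 := ψ.injective (Subtype.ext h2)
      have h4 : (σ * c)⁻¹ = (σ * d)⁻¹ := congrArg Subtype.val h3
      have h5 := inv_injective h4
      exact mul_left_cancel h5
  have hφcp : ColourPreserving S φ := by
    rintro x s (⟨t, htT, rfl⟩ | hsσ)
    · -- s = ↑t
      by_cases hx : x ∈ A
      · have hxt : x * (t : D) ∈ A := Subgroup.mul_mem A hx t.2
        have harg : (⟨x * (t : D), hxt⟩ : A) = ⟨x, hx⟩ * t := rfl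
        rw [hφin _ hxt, hφin x hx, harg]
        rcases hcp ⟨x, hx⟩ t htT with h | h
        · left; rw [h]; norm_cast
        · right; rw [h]; norm_cast
      · have hxt : x * (t : D) ∉ A := fun hc => hx ((hnotA.mp hc).mpr t.2)
        rw [hφout _ hxt, hφout x hx]
        set c : A := ⟨(σ * x)⁻¹, hmem2 x hx⟩ with hc
        have harg : (⟨(σ * (x * (t : D)))⁻¹, hmem2 _ hxt⟩ : A) = c * t⁻¹ := by
          refine Subtype.ext ?_
          show (σ * (x * (t : D)))⁻¹ = (σ * x)⁻¹ * ((t : D))⁻¹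
          rw [← mul_assoc, mul_inv_rev]
          exact hcommD _ _ (Subgroup.inv_mem A t.2) (hmem2 x hx)
        rw [harg]
        rcases hcp c t⁻¹ (hTsymm t htT) with h | h
        · left
          rw [h]
          have : ((ψ c * ↑t⁻¹ : A) : D)⁻¹ = (t : D) * ((ψ c : D))⁻¹ := by
            push_cast
            rw [mul_inv_rev, inv_inv]
          rw [this, ← mul_assoc, mul_assoc σ _ _,
            hcommD _ _ (by exact t.2) (Subgroup.inv_mem A (ψ c).2), ← mul_assoc]
        · right
          rw [h]
          have : ((ψ c * (t⁻¹)⁻¹ : A) : D)⁻¹ = ((t : D))⁻¹ * ((ψ c : D))⁻¹ := by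
            push_cast
            rw [inv_inv, mul_inv_rev]
          rw [this, ← mul_assoc, mul_assoc σ _ _,
            hcommD _ _ (Subgroup.inv_mem A t.2) (Subgroup.inv_mem A (ψ c).2), ← mul_assoc]
    · -- s = σ
      rw [Set.mem_singleton_iff] at hsσ
      rw [hsσ]
      left
      by_cases hx : x ∈ A
      · have hxσ : x * σ ∉ A := fun hc => hσA ((hnotA.mp hc).mp hx)
        rw [hφout _ hxσ, hφin x hx]
        have harg : (⟨(σ * (x * σ))⁻¹, hmem2 _ hxσ⟩ : A) = ⟨x, hx⟩ := by
          refine Subtype.ext ?_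
          show (σ * (x * σ))⁻¹ = x
          rw [← mul_assoc, hσc x hx, inv_inv]
        rw [harg]
        have h2 := hswap σ hσA ((ψ ⟨x, hx⟩ : A) : D)⁻¹ (Subgroup.inv_mem A (ψ _).2)
        rw [inv_inv] at h2
        exact h2
      · have hxσ : x * σ ∈ A := hnotA.mpr (iff_of_false hx hσA)
        rw [hφin _ hxσ, hφout x hx]
        have harg : (⟨x * σ, hxσ⟩ : A) = ⟨(σ * x)⁻¹, hmem2 x hx⟩ := by
          refine Subtype.ext ?_
          show x * σ = (σ * x)⁻¹
          rw [mul_inv_rev, hσinv, hflipinv x hx]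
        rw [harg]
        rw [mul_assoc, ← hswap σ hσA _ (ψ _).2, ← mul_assoc, hσσ, one_mul]
  obtain ⟨β, g, hβ⟩ := hD S hSinv hSgen (Equiv.ofBijective φ
    (Finite.injective_iff_bijective.mp hφinj)) hφcp
  have hβ' : ∀ d : D, φ d = β (g * d) := by
    intro d
    have h0 := hβ d
    have h1 : (Equiv.ofBijective φ (Finite.injective_iff_bijective.mp hφinj)) d = φ d := rfl
    rwa [h1] at h0
  have hφ1A : φ 1 ∈ A := hφinA 1 (Subgroup.one_mem A)
  have hβg : β g = φ 1 := by
    have := hβ' 1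
    rw [mul_one] at this
    exact this.symm
  have hβA : ∀ a : A, β (a : D) ∈ A := by
    intro a
    have h1 : φ (a : D) = β g * β (a : D) := by rw [hβ' (a : D), map_mul]
    have h2 : β (a : D) = (φ 1)⁻¹ * φ (a : D) := by
      rw [h1, hβg, ← mul_assoc, inv_mul_cancel, one_mul]
    rw [h2]
    exact Subgroup.mul_mem A (Subgroup.inv_mem A hφ1A) (hφinA _ a.2)
  set αf : A → A := fun a => ⟨β (a : D), hβA a⟩ with hαf
  have hαmul : ∀ a b : A, αf (a * b) = αf a * αf b := by
    intro a b
    refine Subtype.ext ?_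
    show β ((a : D) * (b : D)) = β (a : D) * β (b : D)
    rw [map_mul]
  have hαinj : Function.Injective αf := by
    intro a b hab
    exact Subtype.ext (β.injective (congrArg Subtype.val hab))
  have hαbij : Function.Bijective αf := Finite.injective_iff_bijective.mp hαinj
  set αA := MulEquiv.ofBijective (MonoidHom.mk' αf hαmul) hαbij with hαA
  have hαA_eval : ∀ a : A, αA a = αf a := fun a => rfl
  refine ⟨αA, αA.symm ⟨φ 1, hφ1A⟩, fun a => ?_⟩
  have h1 : ((ψ a : A) : D) = φ (a : D) := (hφin _ a.2).symm
  have h2 : φ (a : D) = φ 1 * β (a : D) := by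
    rw [hβ' (a : D), map_mul, hβg]
  have h3 : ψ a = ⟨φ 1, hφ1A⟩ * αf a := by
    refine Subtype.ext ?_
    show ((ψ a : A) : D) = φ 1 * β (a : D)
    rw [h1, h2]
  rw [h3, map_mul, MulEquiv.apply_symm_apply, hαA_eval]
end Dihedral

lemma zmod_unique_inv (n : ℕ) [NeZero n] :
    ∀ a b : Multiplicative (ZMod n), a ^ 2 = 1 → b ^ 2 = 1 → a = b ∨ a = 1 ∨ b = 1 := by
  have key : ∀ x : ZMod n, x + x = 0 → (x = 0 ∨ x.val + x.val = n) := by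
    intro x hx
    have h1 : ((x.val + x.val : ℕ) : ZMod n) = 0 := by
      push_cast
      rw [ZMod.natCast_rightInverse x]
      exact hx
    have h2 : n ∣ x.val + x.val := (ZMod.natCast_eq_zero_iff _ _).mp h1
    have h3 : x.val < n := ZMod.val_lt x
    obtain ⟨c, hc⟩ := h2
    have : x.val + x.val = 0 ∨ x.val + x.val = n := by
      have h4 : c < 2 := by
        by_contra hge
        push_neg at hge
        have h5 : n * 2 ≤ n * c := Nat.mul_le_mul_left n hge
        omega
      interval_cases c <;> omega
    rcases this with h | h
    · left
      have hval : x.val = 0 := by omega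
      have := ZMod.natCast_rightInverse x
      rw [← this, hval]
      simp
    · right; exact h
  intro a b ha hb
  have ha' : a.toAdd + a.toAdd = 0 := by
    have : a * a = 1 := by rw [← pow_two]; exact ha
    exact congrArg Multiplicative.toAdd this
  have hb' : b.toAdd + b.toAdd = 0 := by
    have : b * b = 1 := by rw [← pow_two]; exact hb
    exact congrArg Multiplicative.toAdd this
  rcases key _ ha' with h1 | h1
  · right; left
    exact congrArg Multiplicative.ofAdd h1
  · rcases key _ hb' with h2 | h2
    · right; right
      exact congrArg Multiplicative.ofAdd h2
    · left
      have hval : (Multiplicative.toAdd a).val = (Multiplicative.toAdd b).val := by omega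
      have : Multiplicative.toAdd a = Multiplicative.toAdd b := by
        rw [← ZMod.natCast_rightInverse (Multiplicative.toAdd a), hval,
          ZMod.natCast_rightInverse]
      exact congrArg Multiplicative.ofAdd this

theorem dihedralGroup_isCCA (n : ℕ) (hn : 0 < n) : IsCCA (DihedralGroup n) := by
  haveI : NeZero n := ⟨hn.ne'⟩
  classical
  set f : Multiplicative (ZMod n) →* DihedralGroup n :=
    { toFun := fun i => DihedralGroup.r i.toAdd
      map_one' := rfl
      map_mul' := fun i j => (DihedralGroup.r_mul_r _ _).symm } with hf
  have finj : Function.Injective f := by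
    intro i j hij
    have : i.toAdd = j.toAdd := DihedralGroup.r.inj hij
    exact this
  set A : Subgroup (DihedralGroup n) := f.range with hA
  set σ : DihedralGroup n := DihedralGroup.sr 0 with hσ
  have hmemr : ∀ i : ZMod n, DihedralGroup.r i ∈ A := fun i => ⟨Multiplicative.ofAdd i, rfl⟩
  have hsrnot : ∀ i : ZMod n, DihedralGroup.sr i ∉ A := by
    rintro i ⟨j, hj⟩
    cases (show DihedralGroup.r j.toAdd = DihedralGroup.sr i from hj)
  have hcomm : ∀ a b : A, a * b = b * a := by
    rintro ⟨a, i, rfl⟩ ⟨b, j, rfl⟩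
    refine Subtype.ext ?_
    show f i * f j = f j * f i
    rw [← map_mul, ← map_mul, mul_comm]
  have hindex : A.index = 2 := by
    rw [Subgroup.index_eq_two_iff]
    refine ⟨σ, fun b => ?_⟩
    cases b with
    | r i =>
        refine Or.inr ⟨hmemr i, ?_⟩
        rw [hσ, DihedralGroup.r_mul_sr]
        exact hsrnot _
    | sr i =>
        refine Or.inl ⟨?_, hsrnot i⟩
        rw [hσ, DihedralGroup.sr_mul_sr]
        exact hmemr _
  have hσ2 : σ ^ 2 = 1 := by
    rw [pow_two, hσ, DihedralGroup.sr_mul_sr, sub_self, DihedralGroup.one_def]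
  have hσnot : σ ∉ A := hsrnot 0
  have hσinv : σ⁻¹ = σ := by
    rw [inv_eq_iff_mul_eq_one, ← pow_two]; exact hσ2
  have hconj : ∀ a ∈ A, σ * a * σ⁻¹ = a⁻¹ := by
    rintro a ⟨i, rfl⟩
    rw [hσinv]
    show DihedralGroup.sr 0 * DihedralGroup.r i.toAdd * DihedralGroup.sr 0
      = (DihedralGroup.r i.toAdd)⁻¹
    rw [DihedralGroup.sr_mul_r, DihedralGroup.sr_mul_sr]
    show DihedralGroup.r (0 - (0 + Multiplicative.toAdd i)) = DihedralGroup.r (-i.toAdd)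
    rw [zero_sub, zero_add]
  have hAcca : IsCCA A :=
    isCCA_of_mulEquiv (MonoidHom.ofInjective finj) (isCCA_of_uniqueInv (zmod_unique_inv n))
  exact genDihedral_cca_of_cca A σ hcomm hindex hσnot hσ2 hconj hAcca


/-- The generalized dihedral group `D` over a finite abelian group `A` is CCA iff `A`
is CCA; in particular, every (finite) dihedral group is CCA. -/
theorem stmt_16 :
    (∀ (D : Type) [Group D] [Finite D] (A : Subgroup D) (σ : D),
      (∀ a b : A, a * b = b * a) → A.index = 2 → σ ∉ A → σ ^ 2 = 1 →
      (∀ a ∈ A, σ * a * σ⁻¹ = a⁻¹) → (IsCCA D ↔ IsCCA A)) ∧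
    (∀ n : ℕ, 0 < n → IsCCA (DihedralGroup n)) := by
  constructor
  · intro D _ _ A σ hcomm hindex hσA hσ2 hconj
    exact ⟨fun h => genDihedral_cca_to_cca A σ hcomm hindex hσA hσ2 hconj h,
      fun h => genDihedral_cca_of_cca A σ hcomm hindex hσA hσ2 hconj h⟩
  · exact dihedralGroup_isCCA
end

section
/- If T is a generating set of a finite group H, and σ is a nontrivial automorphism of H with σ(t) ∈ {t, t⁻¹} for every t ∈ T, then the group (H ⋊ ⟨σ⟩) × ℤ₂ is not strongly CCA. -/
/-- If `T` generates `H` and the nontrivial automorphism `σ` fixes or inverts each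
element of `T`, then `(H ⋊ ⟨σ⟩) × ℤ₂` is not strongly CCA. -/
theorem stmt_17 {H : Type*} [Group H] [Finite H] (T : Set H)
    (hT : Subgroup.closure T = ⊤) (σ : MulAut H) (hσ : σ ≠ 1)
    (hinv : ∀ t ∈ T, σ t = t ∨ σ t = t⁻¹) :
    ¬ IsStronglyCCA
      ((SemidirectProduct H ↥(Subgroup.zpowers σ) (Subgroup.zpowers σ).subtype) ×
        Multiplicative (ZMod 2)) := by
  intro hcca
  classical
  -- σ is an involution
  have hσσ : ∀ h : H, σ (σ h) = h := by
    let K : Subgroup H :=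
      { carrier := {h | σ (σ h) = h}
        one_mem' := by simp
        mul_mem' := by
          intro a b ha hb
          simp only [Set.mem_setOf_eq, map_mul] at *
          rw [ha, hb]
        inv_mem' := by
          intro a ha
          simp only [Set.mem_setOf_eq, map_inv] at *
          rw [ha] }
    have hTK : T ⊆ ↑K := by
      intro t ht
      rcases hinv t ht with h1 | h1 <;>
        · show σ (σ t) = t
          rw [h1]
          simp [h1]
    have h2 : Subgroup.closure T ≤ K := (Subgroup.closure_le K).mpr hTK
    rw [hT] at h2
    intro h
    exact h2 (Subgroup.mem_top h)
  have hσ2 : σ * σ = 1 := by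
    apply DFunLike.ext
    intro h
    simpa [MulAut.mul_apply] using hσσ h
  have hσinv : σ⁻¹ = σ := by
    rw [inv_eq_iff_mul_eq_one, hσ2]
  set σ' : ↥(Subgroup.zpowers σ) := ⟨σ, Subgroup.mem_zpowers σ⟩ with hσ'def
  have hσ'2 : σ' * σ' = 1 := by
    apply Subtype.ext
    exact hσ2
  have hσ'inv : σ'⁻¹ = σ' := by rw [inv_eq_iff_mul_eq_one, hσ'2]
  have hσ'1 : σ' ≠ 1 := by
    intro h
    exact hσ (congrArg Subtype.val h)
  have hu : ∀ u : ↥(Subgroup.zpowers σ), u = 1 ∨ u = σ' := by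
    rintro ⟨u, hmem⟩
    obtain ⟨k, hk⟩ := Subgroup.mem_zpowers_iff.mp hmem
    rcases Int.even_or_odd k with ⟨m, hm⟩ | ⟨m, hm⟩
    · left
      apply Subtype.ext
      show u = 1
      rw [← hk, hm, ← two_mul, zpow_mul]
      simp [zpow_two, pow_two, hσ2]
    · right
      apply Subtype.ext
      show u = σ
      rw [← hk, hm, zpow_add, zpow_mul]
      simp [zpow_two, pow_two, hσ2]
  -- the ambient group
  have hz1 : (Multiplicative.ofAdd (1 : ZMod 2)) ≠ 1 := by decide
  have hz2 : (Multiplicative.ofAdd (1 : ZMod 2)) * (Multiplicative.ofAdd (1 : ZMod 2)) = 1 := by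
    decide
  have hzinv : (Multiplicative.ofAdd (1 : ZMod 2))⁻¹ = Multiplicative.ofAdd (1 : ZMod 2) := by
    decide
  have hε : ∀ ε : Multiplicative (ZMod 2), ε = 1 ∨ ε = Multiplicative.ofAdd 1 := by decide
  set zz : Multiplicative (ZMod 2) := Multiplicative.ofAdd 1 with hzzdef
  set GG := (SemidirectProduct H ↥(Subgroup.zpowers σ) (Subgroup.zpowers σ).subtype) ×
      Multiplicative (ZMod 2) with hGGdef
  -- multiplication and inversion formulas
  have hmul : ∀ (h₁ : H) (u₁ : ↥(Subgroup.zpowers σ)) (ε₁ : Multiplicative (ZMod 2)) h₂ u₂ ε₂,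
      ((⟨h₁, u₁⟩, ε₁) : GG) * (⟨h₂, u₂⟩, ε₂) = (⟨h₁ * u₁.1 h₂, u₁ * u₂⟩, ε₁ * ε₂) := by
    intros h₁ u₁ ε₁ h₂ u₂ ε₂
    refine Prod.ext ?_ rfl
    refine SemidirectProduct.ext ?_ rfl
    show h₁ * ((Subgroup.zpowers σ).subtype u₁) h₂ = h₁ * u₁.1 h₂
    rw [Subgroup.coe_subtype]
  have hginv : ∀ (h₁ : H) (u₁ : ↥(Subgroup.zpowers σ)) (ε₁ : Multiplicative (ZMod 2)),
      ((⟨h₁, u₁⟩, ε₁) : GG)⁻¹ = (⟨(u₁⁻¹).1 h₁⁻¹, u₁⁻¹⟩, ε₁⁻¹) := by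
    intros h₁ u₁ ε₁
    refine Prod.ext ?_ rfl
    refine SemidirectProduct.ext ?_ rfl
    show ((Subgroup.zpowers σ).subtype _) h₁⁻¹ = (u₁⁻¹).1 h₁⁻¹
    rw [Subgroup.coe_subtype]
  -- the colour-permuting bijection
  set f : GG → GG := (fun x =>
    (⟨x.1.left, if x.2 = 1 then 1 else σ'⟩, x.2 * if x.1.right = 1 then 1 else zz)) with hfdef
  have hfeval : ∀ (h : H) u ε,
      f ((⟨h, u⟩, ε) : GG) = (⟨h, if ε = 1 then 1 else σ'⟩, ε * if u = 1 then 1 else zz) :=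
    fun _ _ _ => rfl
  have hf00 : ∀ h : H, f ((⟨h, 1⟩, 1) : GG) = (⟨h, 1⟩, 1) := by
    intro h; rw [hfeval, if_pos rfl, if_pos rfl, mul_one]
  have hf01 : ∀ h : H, f ((⟨h, 1⟩, zz) : GG) = (⟨h, σ'⟩, zz) := by
    intro h; rw [hfeval, if_neg hz1, if_pos rfl, mul_one]
  have hf10 : ∀ h : H, f ((⟨h, σ'⟩, 1) : GG) = (⟨h, 1⟩, zz) := by
    intro h; rw [hfeval, if_pos rfl, if_neg hσ'1, one_mul]
  have hf11 : ∀ h : H, f ((⟨h, σ'⟩, zz) : GG) = (⟨h, σ'⟩, 1) := by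
    intro h; rw [hfeval, if_neg hz1, if_neg hσ'1, hz2]
  have hf3 : ∀ x : GG, f (f (f x)) = x := by
    rintro ⟨⟨h, u⟩, ε⟩
    rcases hu u with rfl | rfl <;> rcases hε ε with rfl | rfl
    · rw [hf00, hf00, hf00]
    · rw [hf01, hf11, hf10]
    · rw [hf10, hf01, hf11]
    · rw [hf11, hf10, hf01]
  set φ : Equiv.Perm GG := ⟨f, f ∘ f, fun x => hf3 x, fun x => by
    show f (f (f x)) = x; exact hf3 x⟩ with hφdef
  have hσ'val : ∀ h : H, σ'.1 h = σ h := fun _ => rfl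
  have hone : ((⟨1, 1⟩, 1) : GG) = 1 := rfl
  -- the connection set
  set p : H → GG := fun t => (⟨t, 1⟩, 1) with hpdef
  set A : GG := (⟨1, σ'⟩, 1) with hAdef
  set Z : GG := (⟨1, 1⟩, zz) with hZdef
  set B : GG := (⟨1, σ'⟩, zz) with hBdef
  set T' : Set H := T ∪ T⁻¹ with hT'def
  set S : Set GG := (p '' T') ∪ {A, Z, B} with hSdef
  have hT'inv : ∀ t ∈ T', t⁻¹ ∈ T' := by
    intro t ht
    rcases ht with ht | ht
    · exact Or.inr (by simpa using ht)
    · exact Or.inl (by simpa using ht)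
  have hinv' : ∀ t ∈ T', σ t = t ∨ σ t = t⁻¹ := by
    intro t ht
    rcases ht with ht | ht
    · exact hinv t ht
    · have ht2 : t⁻¹ ∈ T := by simpa using ht
      rcases hinv _ ht2 with h1 | h1
      · left
        calc σ t = (σ t⁻¹)⁻¹ := by rw [map_inv, inv_inv]
        _ = t := by rw [h1, inv_inv]
      · right
        calc σ t = (σ t⁻¹)⁻¹ := by rw [map_inv, inv_inv]
        _ = t⁻¹ := by rw [h1, inv_inv]
  have hT'σ : ∀ t ∈ T', σ t ∈ T' := by
    intro t ht
    rcases hinv' t ht with h1 | h1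
    · rwa [h1]
    · rw [h1]; exact hT'inv t ht
  -- inversion facts
  have hpinv : ∀ t : H, (p t)⁻¹ = p t⁻¹ := by
    intro t
    rw [hpdef]
    simp only []
    rw [hginv]
    simp
  have hAinv : A⁻¹ = A := by
    rw [hAdef, hginv, hσ'inv]
    simp
  have hZinv : Z⁻¹ = Z := by
    rw [hZdef, hginv, hzinv]
    simp
  have hBinv : B⁻¹ = B := by
    rw [hBdef, hginv, hσ'inv, hzinv]
    simp
  -- distinctness
  have hAZ : A ≠ Z := fun h => hz1 ((congrArg Prod.snd h).symm)
  have hAB : A ≠ B := fun h => hz1 ((congrArg Prod.snd h).symm)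
  have hZB : Z ≠ B := fun h => hσ'1 ((congrArg (fun x : GG => x.1.right) h)).symm
  have hpA : ∀ t : H, p t ≠ A := fun t h => hσ'1 ((congrArg (fun x : GG => x.1.right) h)).symm
  have hpZ : ∀ t : H, p t ≠ Z := fun t h => hz1 ((congrArg Prod.snd h).symm)
  have hpB : ∀ t : H, p t ≠ B := fun t h => hz1 ((congrArg Prod.snd h).symm)
  -- S is inverse-closed
  have hmemS : ∀ x ∈ S, x⁻¹ ∈ S := by
    intro x hx
    rcases hx with ⟨t, ht, rfl⟩ | hx
    · rw [hpinv]
      exact Or.inl ⟨t⁻¹, hT'inv t ht, rfl⟩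
    · simp only [Set.mem_insert_iff, Set.mem_singleton_iff] at hx
      rcases hx with rfl | rfl | rfl
      · rw [hAinv]; right; left; rfl
      · rw [hZinv]; right; right; left; rfl
      · rw [hBinv]; right; right; right; rfl
  have hSinv : S⁻¹ = S := by
    ext x
    rw [Set.mem_inv]
    constructor
    · intro hx
      have := hmemS _ hx
      rwa [inv_inv] at this
    · intro hx
      exact hmemS _ hx
  -- S generates
  have hAS : A ∈ S := by right; left; rfl
  have hZS : Z ∈ S := by right; right; left; rfl
  have hBS : B ∈ S := by right; right; right; rfl
  have hclos : Subgroup.closure S = ⊤ := by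
    rw [eq_top_iff]
    rintro ⟨⟨h, u⟩, ε⟩ -
    have hA' : A ∈ Subgroup.closure S := Subgroup.subset_closure hAS
    have hZ' : Z ∈ Subgroup.closure S := Subgroup.subset_closure hZS
    have hembT : ∀ h : H, ((⟨h, 1⟩, 1) : GG) ∈ Subgroup.closure S := by
      let emb : H →* GG :=
        { toFun := fun h => (⟨h, 1⟩, 1)
          map_one' := rfl
          map_mul' := by
            intro a b
            rw [hmul]
            simp }
      intro h
      have h1 : emb h ∈ (Subgroup.closure T).map emb :=
        Subgroup.mem_map_of_mem _ (by rw [hT]; trivial)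
      rw [MonoidHom.map_closure] at h1
      have h2 : Subgroup.closure (⇑emb '' T) ≤ Subgroup.closure S := by
        apply Subgroup.closure_mono
        rintro x ⟨t, ht, rfl⟩
        exact Or.inl ⟨t, Or.inl ht, rfl⟩
      exact h2 h1
    have hx : ((⟨h, u⟩, ε) : GG) = (⟨h, 1⟩, 1) * (⟨1, u⟩, 1) * (⟨1, 1⟩, ε) := by
      rw [hmul, hmul]
      simp
    rw [hx]
    refine mul_mem (mul_mem (hembT h) ?_) ?_
    · rcases hu u with rfl | rfl
      · rw [hone]; exact one_mem _
      · exact hA'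
    · rcases hε ε with rfl | rfl
      · rw [hone]; exact one_mem _
      · exact hZ'
  -- the colour permutation
  set π : GG → GG := (fun g => if g = A then Z else if g = Z then B else if g = B then A
      else A * g * A) with hπdef
  have hπA : π A = Z := by rw [hπdef]; simp
  have hπZ : π Z = B := by
    rw [hπdef]; simp only []
    rw [if_neg (Ne.symm hAZ)]; simp
  have hπB : π B = A := by
    rw [hπdef]; simp only []
    rw [if_neg (Ne.symm hAB), if_neg (Ne.symm hZB)]; simp
  have hπp : ∀ t : H, π (p t) = p (σ t) := by
    intro t
    rw [hπdef]; simp only []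
    rw [if_neg (hpA t), if_neg (hpZ t), if_neg (hpB t)]
    rw [hAdef, hpdef]
    simp only []
    rw [hmul, hmul]
    refine Prod.ext ?_ (by simp)
    refine SemidirectProduct.ext ?_ (by simp [hσ'2])
    show 1 * σ'.1 t * (σ' * 1).1 1 = σ t
    simp [hσ'val]
  -- π is a bijection of S
  have hπbij : Set.BijOn π S S := by
    refine ⟨?_, ?_, ?_⟩
    · intro x hx
      rcases hx with ⟨t, ht, rfl⟩ | hx
      · rw [hπp]; exact Or.inl ⟨σ t, hT'σ t ht, rfl⟩
      · simp only [Set.mem_insert_iff, Set.mem_singleton_iff] at hx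
        rcases hx with rfl | rfl | rfl
        · rw [hπA]; exact hZS
        · rw [hπZ]; exact hBS
        · rw [hπB]; exact hAS
    · intro x hx y hy hxy
      rcases hx with ⟨t, ht, rfl⟩ | hx <;> rcases hy with ⟨s, hs, rfl⟩ | hy
      · rw [hπp, hπp] at hxy
        have h2 : σ t = σ s := congrArg (fun w : GG => w.1.left) hxy
        have h3 : t = s := by
          have := congrArg σ h2
          rwa [hσσ, hσσ] at this
        rw [h3]
      · simp only [Set.mem_insert_iff, Set.mem_singleton_iff] at hy
        rw [hπp] at hxy
        rcases hy with rfl | rfl | rfl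
        · rw [hπA] at hxy; exact absurd hxy (hpZ _)
        · rw [hπZ] at hxy; exact absurd hxy (hpB _)
        · rw [hπB] at hxy; exact absurd hxy (hpA _)
      · simp only [Set.mem_insert_iff, Set.mem_singleton_iff] at hx
        rw [hπp] at hxy
        rcases hx with rfl | rfl | rfl
        · rw [hπA] at hxy; exact absurd hxy.symm (hpZ _)
        · rw [hπZ] at hxy; exact absurd hxy.symm (hpB _)
        · rw [hπB] at hxy; exact absurd hxy.symm (hpA _)
      · simp only [Set.mem_insert_iff, Set.mem_singleton_iff] at hx hy
        rcases hx with rfl | rfl | rfl <;> rcases hy with rfl | rfl | rfl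
        · rfl
        · rw [hπA, hπZ] at hxy; exact absurd hxy hZB
        · rw [hπA, hπB] at hxy; exact absurd hxy.symm hAZ
        · rw [hπZ, hπA] at hxy; exact absurd hxy.symm hZB
        · rfl
        · rw [hπZ, hπB] at hxy; exact absurd hxy.symm hAB
        · rw [hπB, hπA] at hxy; exact absurd hxy hAZ
        · rw [hπB, hπZ] at hxy; exact absurd hxy hAB
        · rfl
    · intro x hx
      rcases hx with ⟨t, ht, rfl⟩ | hx
      · refine ⟨p (σ t), Or.inl ⟨σ t, hT'σ t ht, rfl⟩, ?_⟩
        rw [hπp]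
        congr 1
        exact hσσ t
      · simp only [Set.mem_insert_iff, Set.mem_singleton_iff] at hx
        rcases hx with rfl | rfl | rfl
        · exact ⟨B, hBS, hπB⟩
        · exact ⟨A, hAS, hπA⟩
        · exact ⟨Z, hZS, hπZ⟩
  have hπinvc : ∀ s ∈ S, π s⁻¹ = (π s)⁻¹ := by
    intro s hs
    rcases hs with ⟨t, ht, rfl⟩ | hs
    · rw [hpinv, hπp, hπp, hpinv, map_inv]
    · simp only [Set.mem_insert_iff, Set.mem_singleton_iff] at hs
      rcases hs with rfl | rfl | rfl
      · rw [hAinv, hπA, hZinv]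
      · rw [hZinv, hπZ, hBinv]
      · rw [hBinv, hπB, hAinv]
  -- the edge-colour conditions
  have hedge : ∀ x : GG, ∀ s ∈ S, f (x * s) = f x * π s ∨ f (x * s) = f x * (π s)⁻¹ := by
    rintro ⟨⟨h, u⟩, ε⟩ s hs
    rcases hs with ⟨t, ht, rfl⟩ | hs
    · rw [hπp, hpinv]
      rcases hinv' t ht with hfix | hflip
      · left
        rw [hpdef]
        simp only []
        rcases hu u with rfl | rfl <;> rcases hε ε with rfl | rfl <;>
          simp only [hmul, map_one, mul_one, one_mul, OneMemClass.coe_one, MulAut.one_apply,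
            hσ'2, hz2, hσ'val, hσσ, hfix, hf00, hf01, hf10, hf11, Prod.mk.injEq,
            SemidirectProduct.ext_iff, mul_right_inj, and_self]
      · rw [hpdef]
        simp only []
        rcases hu u with rfl | rfl <;> rcases hε ε with rfl | rfl
        · right
          simp only [hmul, map_one, mul_one, one_mul, OneMemClass.coe_one, MulAut.one_apply,
            hσ'2, hz2, hσ'val, hσσ, hflip, inv_inv, hf00, hf01, hf10, hf11, Prod.mk.injEq,
            SemidirectProduct.ext_iff, mul_right_inj, and_self]
        · left
          simp only [hmul, map_one, mul_one, one_mul, OneMemClass.coe_one, MulAut.one_apply,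
            hσ'2, hz2, hσ'val, hσσ, hflip, map_inv, inv_inv, hf00, hf01, hf10, hf11,
            Prod.mk.injEq, SemidirectProduct.ext_iff, mul_right_inj, and_self]
        · left
          simp only [hmul, map_one, mul_one, one_mul, OneMemClass.coe_one, MulAut.one_apply,
            hσ'2, hz2, hσ'val, hσσ, hflip, hf00, hf01, hf10, hf11, Prod.mk.injEq,
            SemidirectProduct.ext_iff, mul_right_inj, and_self]
        · right
          simp only [hmul, map_one, mul_one, one_mul, OneMemClass.coe_one, MulAut.one_apply,
            hσ'2, hz2, hσ'val, hσσ, hflip, inv_inv, hf00, hf01, hf10, hf11, Prod.mk.injEq,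
            SemidirectProduct.ext_iff, mul_right_inj, and_self]
    · simp only [Set.mem_insert_iff, Set.mem_singleton_iff] at hs
      rcases hs with rfl | rfl | rfl
      · rw [hπA, hZinv]
        left
        rw [hAdef, hZdef]
        rcases hu u with rfl | rfl <;> rcases hε ε with rfl | rfl <;>
          simp only [hmul, map_one, mul_one, one_mul, OneMemClass.coe_one, MulAut.one_apply,
            hσ'2, hz2, hf00, hf01, hf10, hf11, Prod.mk.injEq, SemidirectProduct.ext_iff,
            and_self]
      · rw [hπZ, hBinv]
        left
        rw [hZdef, hBdef]
        rcases hu u with rfl | rfl <;> rcases hε ε with rfl | rfl <;>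
          simp only [hmul, map_one, mul_one, one_mul, OneMemClass.coe_one, MulAut.one_apply,
            hσ'2, hz2, hf00, hf01, hf10, hf11, Prod.mk.injEq, SemidirectProduct.ext_iff,
            and_self]
      · rw [hπB, hAinv]
        left
        rw [hBdef, hAdef]
        rcases hu u with rfl | rfl <;> rcases hε ε with rfl | rfl <;>
          simp only [hmul, map_one, mul_one, one_mul, OneMemClass.coe_one, MulAut.one_apply,
            hσ'2, hz2, hf00, hf01, hf10, hf11, Prod.mk.injEq, SemidirectProduct.ext_iff,
            and_self]
  -- apply the strong CCA hypothesis
  have hφcoe : ∀ x : GG, φ x = f x := fun _ => rfl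
  have haff : IsAffineMap (⇑φ) := by
    apply hcca S hSinv hclos φ
    exact ⟨π, hπbij, hπinvc, fun x s hs => by
      rw [hφcoe, hφcoe]; exact hedge x s hs⟩
  obtain ⟨α, g, hαg⟩ := haff
  have hf1 : f (1 : GG) = 1 := by
    rw [← hone]
    exact hf00 1
  have hg1 : g = 1 := by
    have h1 : φ (1 : GG) = α (g * 1) := hαg 1
    rw [mul_one] at h1
    have h2 : α g = 1 := by
      rw [← h1, hφcoe, hf1]
    have h3 : α g = α 1 := by rw [h2, map_one]
    exact α.injective h3
  obtain ⟨h₀, hh₀⟩ : ∃ h : H, σ h ≠ h := by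
    by_contra hc
    push_neg at hc
    exact hσ (DFunLike.ext _ _ fun h => by simpa using hc h)
  have e1 : φ (A * p h₀) = α A * α (p h₀) := by
    rw [hαg, hg1, one_mul, map_mul]
  have c0 : A * p h₀ = ((⟨σ h₀, σ'⟩, 1) : GG) := by
    rw [hAdef, hpdef]
    simp only []
    rw [hmul]
    simp [hσ'val]
  have c1 : φ (A * p h₀) = ((⟨σ h₀, 1⟩, zz) : GG) := by
    rw [hφcoe, c0, hf10]
  have c2 : α A * α (p h₀) = ((⟨h₀, 1⟩, zz) : GG) := by
    have eA : α A = f A := by rw [← hφcoe, hαg, hg1, one_mul]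
    have eP : α (p h₀) = f (p h₀) := by rw [← hφcoe, hαg, hg1, one_mul]
    rw [eA, eP, hAdef, hpdef]
    simp only []
    rw [hf10, hf00, hmul]
    simp
  rw [c1, c2] at e1
  have : σ h₀ = h₀ := congrArg (fun w : GG => w.1.left) e1
  exact hh₀ this
end

section
/- Let C be a cyclic normal subgroup of a finite group H such that |C| is coprime to the index |H:C|, and no element of H ∖ C centralizes C. Then for every automorphism α of H and every h ∈ H, α(h) ∈ hC. -/

lemma aux_mem_of_aut {H : Type*} [Group H] [Finite H] (C : Subgroup H) [C.Normal]
    (hcop : Nat.Coprime (Nat.card C) C.index) (α : H ≃* H) {c : H} (hc : c ∈ C) :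
    α c ∈ C := by
  rw [← QuotientGroup.eq_one_iff]
  have h1 : orderOf ((↑(α c)) : H ⧸ C) ∣ Nat.card C := by
    calc orderOf ((↑(α c)) : H ⧸ C) ∣ orderOf (α c) :=
          orderOf_map_dvd (QuotientGroup.mk' C) (α c)
      _ = orderOf c := orderOf_injective α.toMonoidHom α.injective c
      _ ∣ Nat.card C := Subgroup.orderOf_dvd_natCard C hc
  have h2 : orderOf ((↑(α c)) : H ⧸ C) ∣ C.index := by
    rw [Subgroup.index]
    exact orderOf_dvd_natCard _
  exact orderOf_eq_one_iff.mp (Nat.eq_one_of_dvd_one (hcop ▸ Nat.dvd_gcd h1 h2))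

/-- If `C` is a cyclic normal subgroup of `H` with `|C|` coprime to `|H:C|` and no
element of `H ∖ C` centralizes `C`, then every automorphism `α` of `H` satisfies
`α(h) ∈ hC`, i.e. `h⁻¹ α(h) ∈ C`. -/
theorem stmt_18 {H : Type*} [Group H] [Finite H] (C : Subgroup H) [C.Normal]
    (hcyc : IsCyclic C) (hcop : Nat.Coprime (Nat.card C) C.index)
    (hcent : ∀ h : H, h ∉ C → ∃ c ∈ C, h * c ≠ c * h)
    (α : H ≃* H) (h : H) : h⁻¹ * α h ∈ C := by
  haveI := hcyc
  -- conjugation by h restricted to C is a power map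
  have conj_mem : ∀ c ∈ C, h * c * h⁻¹ ∈ C := fun c hc =>
    Subgroup.Normal.conj_mem ‹C.Normal› c hc h
  let σ : C →* C := {
    toFun := fun c => ⟨h * c * h⁻¹, conj_mem c c.2⟩
    map_one' := by ext; simp
    map_mul' := fun a b => by ext; simp [mul_assoc] }
  obtain ⟨m, hm⟩ := MonoidHom.map_cyclic σ
  have hpow : ∀ c : H, (hc : c ∈ C) → h * c * h⁻¹ = c ^ m := by
    intro c hc
    have := hm ⟨c, hc⟩
    have := congrArg (Subtype.val) this
    simpa [σ] using this
  -- key : conjugation by α h agrees with conjugation by h on C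
  have key : ∀ c ∈ C, α h * c * (α h)⁻¹ = h * c * h⁻¹ := by
    intro c hc
    have hc' : α.symm c ∈ C := aux_mem_of_aut C hcop α.symm hc
    calc α h * c * (α h)⁻¹ = α (h * α.symm c * h⁻¹) := by
          simp [map_mul]
      _ = α ((α.symm c) ^ m) := by rw [hpow _ hc']
      _ = c ^ m := by rw [map_zpow]; simp
      _ = h * c * h⁻¹ := (hpow c hc).symm
  -- x := α h * h⁻¹ centralizes C
  set x := α h * h⁻¹ with hx
  have hcomm : ∀ c ∈ C, x * c = c * x := by
    intro c hc
    have h1 : h⁻¹ * c * h ∈ C := by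
      simpa using Subgroup.Normal.conj_mem ‹C.Normal› c hc h⁻¹
    have h2 := key _ h1
    have : α h * (h⁻¹ * c * h) * (α h)⁻¹ = c := by
      rw [h2]; group
    calc x * c = α h * h⁻¹ * c := rfl
      _ = (α h * (h⁻¹ * c * h) * (α h)⁻¹) * (α h * h⁻¹) := by group
      _ = c * x := by rw [this]
  have hxC : x ∈ C := by
    by_contra hxC
    obtain ⟨c, hc, hne⟩ := hcent x hxC
    exact hne (hcomm c hc)
  have : h⁻¹ * x * h ∈ C := by
    simpa using Subgroup.Normal.conj_mem ‹C.Normal› x hxC h⁻¹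
  simpa [hx, mul_assoc] using this
end

section
/- A finite group G is CCA if and only if for every symmetric generating set S of G in which every element has prime-power order, the Cayley graph Cay(G;S) is CCA. The same equivalence holds for strongly CCA. -/
section Aux
variable {G : Type*} [Group G]

private lemma cancel2 {s : G} {k : ℤ} (e : s ^ (k + 2) = s ^ k) : s * s = 1 := by
  have h1 : s ^ ((k + 2) - k) = 1 := by
    rw [zpow_sub, e, mul_inv_cancel]
  have h2 : ((k + 2) - k) = 2 := by ring
  rw [h2, show (2:ℤ) = 1 + 1 from rfl, zpow_add, zpow_one] at h1
  exact h1

private lemma aux_pos (φ : G → G) (hinj : Function.Injective φ) {s t : G}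
    (hss : s * s ≠ 1)
    (hstep : ∀ x : G, φ (x * s) = φ x * t ∨ φ (x * s) = φ x * t⁻¹)
    (x : G) (h0 : φ (x * s) = φ x * t) :
    ∀ k : ℤ, φ (x * s ^ k) = φ x * t ^ k := by
  have main : ∀ k : ℤ, φ (x * s ^ k) = φ x * t ^ k ∧
      φ (x * s ^ (k + 1)) = φ x * t ^ (k + 1) := by
    intro k
    induction k using Int.induction_on with
    | zero =>
      constructor
      · simp
      · simpa using h0
    | succ i ih =>
      obtain ⟨a, b⟩ := ih
      refine ⟨b, ?_⟩
      rcases hstep (x * s ^ ((i : ℤ) + 1)) with h | h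
      · rw [mul_assoc, ← zpow_add_one] at h
        rw [h, b, mul_assoc, ← zpow_add_one]
      · exfalso
        rw [mul_assoc, ← zpow_add_one] at h
        have hbad : φ (x * s ^ ((i : ℤ) + 1 + 1)) = φ (x * s ^ (i : ℤ)) := by
          rw [h, b, a]; group
        have h2 := mul_left_cancel (hinj hbad)
        exact hss (cancel2 (show s ^ ((i:ℤ) + 2) = s ^ (i:ℤ) by
          rw [show (i:ℤ) + 2 = (i:ℤ) + 1 + 1 by ring]; exact h2))
    | pred i ih =>
      obtain ⟨a, b⟩ := ih
      have b' : φ (x * s ^ (-(i:ℤ) - 1 + 1)) = φ x * t ^ (-(i:ℤ) - 1 + 1) := by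
        rw [show -(i:ℤ) - 1 + 1 = -(i:ℤ) by ring]; exact a
      refine ⟨?_, b'⟩
      rcases hstep (x * s ^ (-(i:ℤ) - 1)) with h | h
      · rw [mul_assoc, ← zpow_add_one] at h
        have h3 : φ (x * s ^ (-(i:ℤ) - 1)) * t = φ x * t ^ (-(i:ℤ) - 1 + 1) := by
          rw [← h, b']
        have h4 : φ (x * s ^ (-(i:ℤ) - 1)) = φ x * t ^ (-(i:ℤ) - 1 + 1) * t⁻¹ := by
          rw [← h3]; group
        rw [h4]; group
      · exfalso
        rw [mul_assoc, ← zpow_add_one] at h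
        have h3 : φ (x * s ^ (-(i:ℤ) - 1)) * t⁻¹ = φ x * t ^ (-(i:ℤ) - 1 + 1) := by
          rw [← h, b']
        have h4 : φ (x * s ^ (-(i:ℤ) - 1)) = φ x * t ^ (-(i:ℤ) + 1) := by
          rw [← mul_inv_cancel_right (φ (x * s ^ (-(i:ℤ) - 1))) t⁻¹, h3]; group
        have hbad : φ (x * s ^ (-(i:ℤ) + 1)) = φ (x * s ^ (-(i:ℤ) - 1)) := by
          rw [h4, ← b, show -(i:ℤ) + 1 = -(i:ℤ) + 1 by ring]
        have h2 := mul_left_cancel (hinj hbad)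
        exact hss (cancel2 (show s ^ ((-(i:ℤ) - 1) + 2) = s ^ (-(i:ℤ) - 1) by
          rw [show (-(i:ℤ) - 1) + 2 = -(i:ℤ) + 1 by ring]; exact h2))
  exact fun k => (main k).1
end Aux

section Aux2
variable {G : Type*} [Group G]

private lemma sign_lemma (φ : G → G) (hinj : Function.Injective φ) {s t : G}
    (h2 : s * s = 1 → t * t = 1)
    (hstep : ∀ x : G, φ (x * s) = φ x * t ∨ φ (x * s) = φ x * t⁻¹) (x : G) :
    ∃ ε : ℤ, (ε = 1 ∨ ε = -1) ∧ ∀ k : ℤ, φ (x * s ^ k) = φ x * t ^ (ε * k) := by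
  by_cases ht : t⁻¹ = t
  · refine ⟨1, Or.inl rfl, ?_⟩
    intro k
    rw [one_mul]
    induction k using Int.induction_on with
    | zero => simp
    | succ i ih =>
      have h : φ (x * s ^ ((i:ℤ) + 1)) = φ (x * s ^ (i:ℤ)) * t := by
        rcases hstep (x * s ^ (i:ℤ)) with h | h
        · rw [← h, mul_assoc, ← zpow_add_one]
        · rw [ht] at h; rw [← h, mul_assoc, ← zpow_add_one]
      rw [h, ih, mul_assoc, ← zpow_add_one]
    | pred i ih =>
      have h : φ (x * s ^ (-(i:ℤ))) = φ (x * s ^ (-(i:ℤ) - 1)) * t := by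
        rcases hstep (x * s ^ (-(i:ℤ) - 1)) with h | h
        · rw [← h, mul_assoc, ← zpow_add_one,
            show -(i:ℤ) - 1 + 1 = -(i:ℤ) by ring]
        · rw [ht] at h
          rw [← h, mul_assoc, ← zpow_add_one, show -(i:ℤ) - 1 + 1 = -(i:ℤ) by ring]
      have : φ (x * s ^ (-(i:ℤ) - 1)) = φ (x * s ^ (-(i:ℤ))) * t⁻¹ := by
        rw [h]; group
      rw [this, ih]
      group
  · have hss : s * s ≠ 1 := fun h => ht (inv_eq_of_mul_eq_one_left (h2 h))
    rcases hstep x with h0 | h0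
    · refine ⟨1, Or.inl rfl, fun k => ?_⟩
      rw [one_mul]
      exact aux_pos φ hinj hss hstep x h0 k
    · have hstep' : ∀ y : G, φ (y * s) = φ y * t⁻¹ ∨ φ (y * s) = φ y * (t⁻¹)⁻¹ := by
        intro y; rcases hstep y with h | h
        · exact Or.inr (by rw [inv_inv]; exact h)
        · exact Or.inl h
      have hss' : s * s ≠ 1 := hss
      have key := aux_pos φ hinj hss' hstep' x h0
      refine ⟨-1, Or.inr rfl, fun k => ?_⟩
      rw [key k, inv_zpow, ← zpow_neg, neg_one_mul]

private lemma order_eq (φ : G → G) (hinj : Function.Injective φ) {s t : G} {ε : ℤ}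
    (hε : ε = 1 ∨ ε = -1)
    (hk : ∀ k : ℤ, φ ((1:G) * s ^ k) = φ 1 * t ^ (ε * k)) :
    orderOf t = orderOf s := by
  have A : ∀ n : ℕ, s ^ n = 1 → t ^ n = 1 := by
    intro n hn
    have h := hk n
    rw [zpow_natCast, hn, mul_one] at h
    have : t ^ (ε * (n:ℤ)) = 1 := by
      have := (left_eq_mul).mp h
      exact this
    rcases hε with rfl | rfl
    · rw [one_mul, zpow_natCast] at this; exact this
    · rw [neg_one_mul, zpow_neg, inv_eq_one, zpow_natCast] at this; exact this
  have B : ∀ n : ℕ, t ^ n = 1 → s ^ n = 1 := by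
    intro n hn
    have h := hk n
    have htε : t ^ (ε * (n:ℤ)) = 1 := by
      rcases hε with rfl | rfl
      · rw [one_mul, zpow_natCast, hn]
      · rw [neg_one_mul, zpow_neg, inv_eq_one, zpow_natCast, hn]
    rw [htε, mul_one] at h
    have h1 : φ ((1:G) * s ^ (n:ℤ)) = φ 1 := h
    have := hinj h1
    rw [one_mul, zpow_natCast] at this
    exact this
  exact Nat.dvd_antisymm
    (orderOf_dvd_of_pow_eq_one (A _ (pow_orderOf_eq_one s)))
    (orderOf_dvd_of_pow_eq_one (B _ (pow_orderOf_eq_one t)))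
end Aux2

section Aux3
variable {G : Type*} [Group G]

private lemma mem_closure_primePow [Finite G] (s : G) (H : Subgroup G)
    (h : ∀ p : ℕ, p.Prime → p ∣ orderOf s →
      s ^ (orderOf s / p ^ (orderOf s).factorization p) ∈ H) :
    s ∈ H := by
  have key : ∀ n : ℕ, ∀ s : G, orderOf s = n →
      (∀ p : ℕ, p.Prime → p ∣ n → s ^ (n / p ^ n.factorization p) ∈ H) → s ∈ H := by
    intro n
    induction n using Nat.strong_induction_on with
    | _ n ih =>
      intro s hs hyp
      have hn0 : n ≠ 0 := by
        rw [← hs]; exact (orderOf_pos s).ne'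
      by_cases hn1 : n = 1
      · have : s = 1 := orderOf_eq_one_iff.mp (by rw [hs, hn1])
        rw [this]; exact H.one_mem
      set p := n.minFac with hp_def
      have hp : p.Prime := Nat.minFac_prime hn1
      have hpd : p ∣ n := Nat.minFac_dvd n
      set a := p ^ n.factorization p with ha_def
      set b := n / a with hb_def
      have hab : a * b = n := Nat.ordProj_mul_ordCompl_eq_self n p
      have ha0 : a ≠ 0 := pow_ne_zero _ hp.pos.ne'
      have hb0 : b ≠ 0 := by
        intro hb; rw [hb, mul_zero] at hab; exact hn0 hab.symm
      have hcop : Nat.Coprime a b := Nat.Coprime.pow_left _ (Nat.coprime_ordCompl hp hn0)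
      by_cases hb1 : b = 1
      · have := hyp p hp hpd
        rw [← hb_def, hb1, pow_one] at this
        exact this
      · -- s ^ b ∈ H directly
        have hsb : s ^ b ∈ H := hyp p hp hpd
        -- s ^ a ∈ H by induction
        have ha1 : 1 < a := by
          have hfp : 0 < n.factorization p := hp.factorization_pos_of_dvd hn0 hpd
          exact Nat.one_lt_pow hfp.ne' hp.one_lt
        have hblt : b < n := by
          rw [← hab]
          exact lt_mul_of_one_lt_left (Nat.pos_of_ne_zero hb0) ha1
        have horder : orderOf (s ^ a) = b := by
          rw [orderOf_pow, hs, Nat.gcd_eq_right ⟨b, hab.symm⟩, hb_def]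
        have hsa : s ^ a ∈ H := by
          apply ih b hblt (s ^ a) horder
          intro q hq hqb
          have hqp : q ≠ p := by
            rintro rfl
            exact hp.ne_one ((Nat.coprime_ordCompl hp hn0).eq_one_of_dvd hqb)
          have haq : a.factorization q = 0 := by
            rw [ha_def, hp.factorization_pow]
            simp [Finsupp.single_apply, hqp.symm]
          have hfac : b.factorization q = n.factorization q := by
            conv_rhs => rw [← hab, Nat.factorization_mul ha0 hb0]
            rw [Finsupp.add_apply, haq, zero_add]
          have hqn : q ∣ n := hqb.trans ⟨a, by rw [← hab]; ring⟩
          have hdvd : q ^ b.factorization q ∣ b := Nat.ordProj_dvd b q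
          have hdvd' : q ^ n.factorization q ∣ b := hfac ▸ hdvd
          have harith : a * (b / q ^ b.factorization q) = n / q ^ n.factorization q :=
            calc a * (b / q ^ b.factorization q)
                = a * (b / q ^ n.factorization q) := by rw [hfac]
              _ = a * b / q ^ n.factorization q := (Nat.mul_div_assoc a hdvd').symm
              _ = n / q ^ n.factorization q := by rw [hab]
          rw [← pow_mul, harith]
          exact hyp q hq hqn
        -- combine via Bezout
        have hcop' : Nat.gcd a b = 1 := hcop
        have hbez : (1 : ℤ) = a * Nat.gcdA a b + b * Nat.gcdB a b := by
          have hg := Nat.gcd_eq_gcd_ab a b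
          rw [hcop'] at hg
          push_cast at hg
          exact hg
        have hzs : s = (s ^ (a:ℤ)) ^ Nat.gcdA a b * (s ^ (b:ℤ)) ^ Nat.gcdB a b := by
          rw [← zpow_mul, ← zpow_mul, ← zpow_add, ← hbez, zpow_one]
        rw [hzs]
        exact H.mul_mem
          (H.zpow_mem (by rw [zpow_natCast]; exact hsa) _)
          (H.zpow_mem (by rw [zpow_natCast]; exact hsb) _)
  exact key (orderOf s) s rfl h
end Aux3

section Main
variable {G : Type*} [Group G]

/-- The refined connection set consisting of prime-power-order "components"
of elements of `S`. -/
private def ppSet (S : Set G) : Set G :=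
  { t | ∃ s ∈ S, ∃ p : ℕ, p.Prime ∧ p ∣ orderOf s ∧
      t = s ^ (orderOf s / p ^ (orderOf s).factorization p) }

private lemma ppSet_inv {S : Set G} (hS : S⁻¹ = S) : (ppSet S)⁻¹ = ppSet S := by
  have key : ∀ t ∈ ppSet S, t⁻¹ ∈ ppSet S := by
    rintro t ⟨s, hs, p, hp, hpd, rfl⟩
    refine ⟨s⁻¹, ?_, p, hp, ?_, ?_⟩
    · rw [← hS]; simpa using hs
    · rwa [orderOf_inv]
    · rw [orderOf_inv, inv_pow]
  ext t
  constructor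
  · intro ht
    have : t⁻¹ ∈ ppSet S := ht
    simpa using key _ this
  · intro ht
    exact Set.mem_inv.mpr (by simpa using key t ht)

private lemma ppSet_orders [Finite G] {S : Set G} :
    ∀ t ∈ ppSet S, IsPrimePow (orderOf t) := by
  rintro t ⟨s, _, p, hp, hpd, rfl⟩
  set n := orderOf s with hn_def
  have hn0 : n ≠ 0 := (orderOf_pos s).ne'
  have ha0 : p ^ n.factorization p ≠ 0 := pow_ne_zero _ hp.pos.ne'
  have hdvd : n / p ^ n.factorization p ∣ n := Nat.ordCompl_dvd n p
  have horder : orderOf (s ^ (n / p ^ n.factorization p)) = p ^ n.factorization p := by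
    rw [orderOf_pow, ← hn_def, Nat.gcd_eq_right hdvd,
      Nat.div_div_self (Nat.ordProj_dvd n p) hn0]
  rw [horder]
  exact ⟨p, n.factorization p, hp.prime, hp.factorization_pos_of_dvd hn0 hpd, rfl⟩

private lemma ppSet_closure [Finite G] {S : Set G} (hgen : Subgroup.closure S = ⊤) :
    Subgroup.closure (ppSet S) = ⊤ := by
  rw [eq_top_iff, ← hgen, Subgroup.closure_le]
  intro s hs
  apply mem_closure_primePow
  intro p hp hpd
  exact Subgroup.subset_closure ⟨s, hs, p, hp, hpd, rfl⟩
end Main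

/-- `G` is (strongly) CCA iff every connected Cayley graph on `G` whose symmetric
generating set consists of elements of prime-power order is (strongly) CCA. -/
theorem stmt_19 {G : Type*} [Group G] [Finite G] :
    (IsCCA G ↔ ∀ S : Set G, S⁻¹ = S → Subgroup.closure S = ⊤ →
      (∀ s ∈ S, IsPrimePow (orderOf s)) →
      ∀ φ : Equiv.Perm G, ColourPreserving S ⇑φ → IsAffineMap ⇑φ) ∧
    (IsStronglyCCA G ↔ ∀ S : Set G, S⁻¹ = S → Subgroup.closure S = ⊤ →
      (∀ s ∈ S, IsPrimePow (orderOf s)) →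
      ∀ φ : Equiv.Perm G, ColourPermuting S ⇑φ → IsAffineMap ⇑φ) := by
  constructor
  · constructor
    · intro h S h1 h2 _ φ hφ
      exact h S h1 h2 φ hφ
    · intro h S hSinv hSgen φ hφ
      apply h (ppSet S) (ppSet_inv hSinv) (ppSet_closure hSgen) ppSet_orders φ
      rintro x t ⟨s, hs, p, hp, hpd, rfl⟩
      obtain ⟨ε, hε, hk⟩ := sign_lemma φ φ.injective (fun h => h)
        (fun y => hφ y s hs) x
      have hkm := hk ((orderOf s / p ^ (orderOf s).factorization p : ℕ) : ℤ)
      rw [zpow_natCast] at hkm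
      rcases hε with rfl | rfl
      · left; rw [hkm, one_mul, zpow_natCast]
      · right; rw [hkm, neg_one_mul, zpow_neg, zpow_natCast]
  · constructor
    · intro h S h1 h2 _ φ hφ
      exact h S h1 h2 φ hφ
    · intro h S hSinv hSgen φ hφ
      obtain ⟨π, hπbij, hπinv, hπstep⟩ := hφ
      have hsign : ∀ s ∈ S, ∀ x : G, ∃ ε : ℤ, (ε = 1 ∨ ε = -1) ∧
          ∀ k : ℤ, φ (x * s ^ k) = φ x * (π s) ^ (ε * k) := by
        intro s hs x
        apply sign_lemma φ φ.injective ?_ (fun y => hπstep y s hs) x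
        intro hss
        have e1 : s⁻¹ = s := inv_eq_of_mul_eq_one_left hss
        have e2 : π s = (π s)⁻¹ := by rw [← hπinv s hs, e1]
        calc π s * π s = π s * (π s)⁻¹ := by rw [← e2]
          _ = 1 := mul_inv_cancel _
      have horder : ∀ s ∈ S, orderOf (π s) = orderOf s := by
        intro s hs
        obtain ⟨ε, hε, hk⟩ := hsign s hs 1
        exact order_eq φ φ.injective hε hk
      have hval : ∀ s ∈ S, ∀ m : ℕ, ∃ ε : ℤ, (ε = 1 ∨ ε = -1) ∧
          (φ 1)⁻¹ * φ (s ^ m) = (π s) ^ (ε * m) ∧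
          (φ 1)⁻¹ * φ ((s ^ m)⁻¹) = ((π s) ^ (ε * (m:ℤ)))⁻¹ := by
        intro s hs m
        obtain ⟨ε, hε, hk⟩ := hsign s hs 1
        refine ⟨ε, hε, ?_, ?_⟩
        · have h1 := hk (m:ℤ)
          rw [one_mul, zpow_natCast] at h1
          rw [h1, inv_mul_cancel_left]
        · have h1 := hk (-(m:ℤ))
          rw [one_mul, zpow_neg, zpow_natCast] at h1
          rw [h1, inv_mul_cancel_left, show ε * -(m:ℤ) = -(ε * m) by ring, zpow_neg]
      apply h (ppSet S) (ppSet_inv hSinv) (ppSet_closure hSgen) ppSet_orders φ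
      refine ⟨fun t => (φ 1)⁻¹ * φ t, ?_, ?_, ?_⟩
      · -- BijOn
        have hmaps : Set.MapsTo (fun t => (φ 1)⁻¹ * φ t) (ppSet S) (ppSet S) := by
          rintro t ⟨s, hs, p, hp, hpd, rfl⟩
          obtain ⟨ε, hε, hv, _⟩ := hval s hs (orderOf s / p ^ (orderOf s).factorization p)
          simp only [Set.mem_setOf_eq]
          rw [hv]
          rcases hε with rfl | rfl
          · rw [one_mul, zpow_natCast]
            refine ⟨π s, hπbij.mapsTo hs, p, hp, ?_, ?_⟩
            · rw [horder s hs]; exact hpd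
            · rw [horder s hs]
          · have hsinv : s⁻¹ ∈ S := by rw [← hSinv]; simpa using hs
            refine ⟨π s⁻¹, hπbij.mapsTo hsinv, p, hp, ?_, ?_⟩
            · rw [horder s⁻¹ hsinv, orderOf_inv]; exact hpd
            · rw [horder s⁻¹ hsinv, orderOf_inv, hπinv s hs,
                neg_one_mul, zpow_neg, zpow_natCast, ← inv_pow]
        have hinj : Set.InjOn (fun t => (φ 1)⁻¹ * φ t) (ppSet S) :=
          fun a _ b _ e => φ.injective (mul_left_cancel e)
        exact ((Set.toFinite _).injOn_iff_bijOn_of_mapsTo hmaps).mp hinj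
      · -- inverse compatibility
        rintro t ⟨s, hs, p, hp, hpd, rfl⟩
        obtain ⟨ε, hε, hv1, hv2⟩ := hval s hs (orderOf s / p ^ (orderOf s).factorization p)
        simp only
        rw [hv1, hv2]
      · -- colour-permuting steps
        rintro x t ⟨s, hs, p, hp, hpd, rfl⟩
        obtain ⟨ε1, hε1, hv1, _⟩ := hval s hs (orderOf s / p ^ (orderOf s).factorization p)
        obtain ⟨ε2, hε2, hk⟩ := hsign s hs x
        have hx := hk ((orderOf s / p ^ (orderOf s).factorization p : ℕ) : ℤ)
        rw [zpow_natCast] at hx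
        simp only
        rw [hv1, hx]
        rcases hε1 with rfl | rfl <;> rcases hε2 with rfl | rfl
        · exact Or.inl rfl
        · right
          rw [← zpow_neg, show -((1:ℤ) * ((orderOf s / p ^ (orderOf s).factorization p : ℕ) : ℤ))
            = (-1) * ((orderOf s / p ^ (orderOf s).factorization p : ℕ) : ℤ) by ring]
        · right
          rw [← zpow_neg, show -((-1:ℤ) * ((orderOf s / p ^ (orderOf s).factorization p : ℕ) : ℤ))
            = (1:ℤ) * ((orderOf s / p ^ (orderOf s).factorization p : ℕ) : ℤ) by ring]
        · exact Or.inl rfl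
end
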